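/- Let W be a classical Weyl group of type A_{n−1}, D_n or B_n, and let Φ : C_n ⋊ ℂW → C_n ⊗ ℂW⁻ be the superalgebra isomorphism that is the identity on C_n and sends s_i ↦ −√−1·β_i t_i. Then for all i ≠ k: Φ((c_k − c_i)·s_{ik}) = −√−2·(1 ⊗ [k,i]); for W of type D_n or B_n, Φ((c_k + c_i)·s̄_{ik}) = −√−2·(1 ⊗ bar[k,i]); and for W of type B_n, Φ(c_i·τ_i) = −√−1·(1 ⊗ bar[i]). (Here √−2 = √2·√−1.) -/

import Mathlib

noncomputable section

abbrev SignFn (n : ℕ) := Fin n → ℤˣ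

/-- The permutation action on sign functions. -/
def permAut (n : ℕ) : Equiv.Perm (Fin n) →* MulAut (SignFn n) where
  toFun σ :=
    { toFun := fun f => f ∘ σ.symm
      invFun := fun f => f ∘ σ
      left_inv := fun f => by ext k; simp
      right_inv := fun f => by ext k; simp
      map_mul' := fun f g => rfl }
  map_one' := by ext f k; simp; rfl
  map_mul' := fun σ τ => by
    ext f k
    show (f ((σ * τ).symm k) : ℤ) = f (τ.symm (σ.symm k))
    rw [Equiv.Perm.mul_def, Equiv.symm_trans_apply]

/-- The hyperoctahedral group `W_{B_n}` of signed permutations, as a semidirect product. -/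
abbrev WB (n : ℕ) := SignFn n ⋊[permAut n] Equiv.Perm (Fin n)

/-- the transposition `s_{ij}` in `W_{B_n}`. -/
def sB {n : ℕ} (i j : Fin n) : WB n := ⟨1, Equiv.swap i j⟩

/-- the transposition with sign changes `s̄_{ij}` in `W_{B_n}`. -/
def sbarB {n : ℕ} (i j : Fin n) : WB n :=
  ⟨fun k => if k = i ∨ k = j then -1 else 1, Equiv.swap i j⟩

/-- the sign change `τ_i` at `i` in `W_{B_n}`. -/
def tauB {n : ℕ} (i : Fin n) : WB n := ⟨fun k => if k = i then -1 else 1, 1⟩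

/-- The signed-permutation action of `w ∈ W_{B_n}` on a basis vector `e_i`:
`w(e_i) = (sign) • e_{(index)}`; we record the pair (sign, index). -/
def actB {n : ℕ} (w : WB n) (i : Fin n) : ℂ × Fin n :=
  (((w.left (w.right i) : ℤ) : ℂ), w.right i)

/-- `W_{D_n}` as the subgroup of even signed permutations inside `W_{B_n}`. -/
def WDsub (n : ℕ) : Subgroup (WB n) where
  carrier := {w | ∏ k, w.left k = 1}
  one_mem' := by simp
  mul_mem' := by
    intro a b ha hb
    simp only [Set.mem_setOf_eq] at *
    have h1 : (a * b).left = a.left * (permAut n a.right) b.left := rfl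
    rw [h1]
    rw [show (∏ k, (a.left * (permAut n a.right) b.left) k) = (∏ k, a.left k) * ∏ k, (permAut n a.right) b.left k from Finset.prod_mul_distrib, ha, one_mul]
    calc ∏ k, (permAut n a.right) b.left k = ∏ k, b.left (a.right.symm k) := rfl
      _ = ∏ k, b.left k := Equiv.prod_comp a.right.symm b.left
      _ = 1 := hb
  inv_mem' := by
    intro a ha
    simp only [Set.mem_setOf_eq] at *
    have h1 : (a⁻¹).left = (permAut n a.right⁻¹) a.left⁻¹ := rfl
    rw [h1]
    calc ∏ k, (permAut n a.right⁻¹) a.left⁻¹ k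
        = ∏ k, a.left⁻¹ ((a.right⁻¹).symm k) := rfl
      _ = ∏ k, (a.left k)⁻¹ := Equiv.prod_comp _ _
      _ = (∏ k, a.left k)⁻¹ := by rw [← Finset.prod_inv_distrib]
      _ = 1 := by rw [ha]; simp

lemma sB_mem {n : ℕ} (i j : Fin n) : sB i j ∈ WDsub n := by
  simp [WDsub, sB]

lemma sbarB_mem {n : ℕ} {i j : Fin n} (h : i ≠ j) : sbarB i j ∈ WDsub n := by
  show ∏ k, (if k = i ∨ k = j then (-1 : ℤˣ) else 1) = 1
  have step : ∀ k, (if k = i ∨ k = j then (-1 : ℤˣ) else 1)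
      = (if k = i then -1 else 1) * (if k = j then -1 else 1) := by
    intro k
    by_cases h1 : k = i <;> by_cases h2 : k = j <;> simp_all
  simp_rw [step, Finset.prod_mul_distrib, Finset.prod_ite_eq', Finset.mem_univ, if_true]
  norm_num

/-- the transposition `s_{ij}` as an element of `W_{D_n}`. -/
def sD {n : ℕ} (i j : Fin n) : WDsub n := ⟨sB i j, sB_mem i j⟩

/-- the transposition with sign changes `s̄_{ij}` as an element of `W_{D_n}` (junk value `1`
when `i = j`). -/
def sbarD {n : ℕ} (i j : Fin n) : WDsub n :=
  if h : i = j then 1 else ⟨sbarB i j, sbarB_mem h⟩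

/-- The signed-permutation action for `W_{D_n}`. -/
def actD {n : ℕ} (w : WDsub n) (i : Fin n) : ℂ × Fin n := actB w.1 i

/-- The (trivially signed) permutation action of `S_n`. -/
def actA (n : ℕ) (σ : Equiv.Perm (Fin n)) (i : Fin n) : ℂ × Fin n := (1, σ i)

/-- Generators of the smash product `C_n ⋊ ℂW`: Clifford generators `c_i` and
group elements `w ∈ W`. -/
inductive KGen (n : ℕ) (G : Type) : Type
  | c : Fin n → KGen n G
  | g : G → KGen n G

abbrev KF (n : ℕ) (G : Type) := FreeAlgebra ℂ (KGen n G)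

def kfC {n : ℕ} {G : Type} (i : Fin n) : KF n G := FreeAlgebra.ι ℂ (KGen.c i)
def kfG {n : ℕ} {G : Type} (w : G) : KF n G := FreeAlgebra.ι ℂ (KGen.g w)

/-- The defining relations of the smash product `C_n ⋊ ℂW`: the Clifford relations,
the group algebra relations, and `w c_i w^{-1} = w(c_i)` where `w(c_i)` is given by the
(signed) permutation action `act`. -/
inductive KRel (n : ℕ) (G : Type) [Group G] (act : G → Fin n → ℂ × Fin n) :
    KF n G → KF n G → Prop
  | cc (i : Fin n) : KRel n G act (kfC i * kfC i) 1
  | canti {i j : Fin n} (h : i ≠ j) : KRel n G act (kfC i * kfC j) (-(kfC j * kfC i))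
  | gone : KRel n G act (kfG (1 : G)) 1
  | gmul (w w' : G) : KRel n G act (kfG w * kfG w') (kfG (w * w'))
  | gc (w : G) (i : Fin n) :
      KRel n G act (kfG w * kfC i) ((act w i).1 • (kfC (act w i).2 * kfG w))

/-- The smash product `C_n ⋊ ℂW`, presented by generators and relations. -/
abbrev Smash (n : ℕ) (G : Type) [Group G] (act : G → Fin n → ℂ × Fin n) :=
  RingQuot (KRel n G act)

def kC {n : ℕ} {G : Type} [Group G] (act : G → Fin n → ℂ × Fin n) (i : Fin n) :
    Smash n G act := RingQuot.mkAlgHom ℂ (KRel n G act) (kfC i)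
def kG {n : ℕ} {G : Type} [Group G] (act : G → Fin n → ℂ × Fin n) (w : G) :
    Smash n G act := RingQuot.mkAlgHom ℂ (KRel n G act) (kfG w)

section TWords

variable {A : Type} [Ring A] [Algebra ℂ A]

/-- `t_{i↑j} = t_i t_{i+1} ⋯ t_j` (1-based indices; empty product if `j < i`). -/
def tUp (T : ℕ → A) (i j : ℕ) : A := ((List.range' i (j + 1 - i)).map T).prod

/-- `t_{i↓j} = t_i t_{i-1} ⋯ t_j` (1-based indices; empty product if `i < j`). -/
def tDown (T : ℕ → A) (i j : ℕ) : A := (((List.range' j (i + 1 - j)).map T).reverse).prod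

/-- The element `[i,j] = (-1)^{j-i-1} t_{j-1} ⋯ t_{i+1} t_i t_{i+1} ⋯ t_{j-1}` for `i < j`
(1-based indices), with `[j,i] = -[i,j]` (junk value `0` for `i = j`). -/
def brK (T : ℕ → A) (i j : ℕ) : A :=
  if i < j then ((-1 : ℂ)) ^ (j - i - 1) • (tDown T (j - 1) i * tUp T (i + 1) (j - 1))
  else if j < i then
    -(((-1 : ℂ)) ^ (i - j - 1) • (tDown T (i - 1) j * tUp T (j + 1) (i - 1)))
  else 0

/-- The element `bar[i,j] = (-1)^{j-i} t_{j↑n-1} t_{i↑n-2} t_n t_{n-1} t_n t_{n-2↓i} t_{n-1↓j}`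
of type `B_n` for `i < j` (1-based indices, `nn = n`), with `bar[j,i] = bar[i,j]`
(junk value `0` for `i = j`). -/
def brBbar (T : ℕ → A) (nn i j : ℕ) : A :=
  if i < j then ((-1 : ℂ)) ^ (j - i) •
    (tUp T j (nn - 1) * tUp T i (nn - 2) * T nn * T (nn - 1) * T nn
      * tDown T (nn - 2) i * tDown T (nn - 1) j)
  else if j < i then ((-1 : ℂ)) ^ (i - j) •
    (tUp T i (nn - 1) * tUp T j (nn - 2) * T nn * T (nn - 1) * T nn
      * tDown T (nn - 2) j * tDown T (nn - 1) i)
  else 0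

/-- The element `bar[i,j] = (-1)^{j-i-1} t_{j↑n-1} t_{i↑n-2} t_n t_{n-2↓i} t_{n-1↓j}`
of type `D_n` for `i < j` (1-based indices), with `bar[j,i] = bar[i,j]`. -/
def brDbar (T : ℕ → A) (nn i j : ℕ) : A :=
  if i < j then ((-1 : ℂ)) ^ (j - i - 1) •
    (tUp T j (nn - 1) * tUp T i (nn - 2) * T nn * tDown T (nn - 2) i * tDown T (nn - 1) j)
  else if j < i then ((-1 : ℂ)) ^ (i - j - 1) •
    (tUp T i (nn - 1) * tUp T j (nn - 2) * T nn * tDown T (nn - 2) j * tDown T (nn - 1) i)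
  else 0

/-- The element `bar[i] = (-1)^{n-i} t_i ⋯ t_{n-1} t_n t_{n-1} ⋯ t_i` of type `B_n`
(1-based index `i`). -/
def brBi (T : ℕ → A) (nn i : ℕ) : A :=
  ((-1 : ℂ)) ^ (nn - i) • (tUp T i (nn - 1) * T nn * tDown T (nn - 1) i)

/-- `{i,j} = z^{j-i-1} t_{j-1} ⋯ t_{i+1} t_i t_{i+1} ⋯ t_{j-1}` for `i < j` in the covering
algebra, with `{j,i} = z {i,j}`. -/
def cbrK (Z : A) (T : ℕ → A) (i j : ℕ) : A :=
  if i < j then Z ^ (j - i - 1) * (tDown T (j - 1) i * tUp T (i + 1) (j - 1))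
  else if j < i then Z * (Z ^ (i - j - 1) * (tDown T (i - 1) j * tUp T (j + 1) (i - 1)))
  else 0

/-- `bar{i,j}` of type `B_n` in the covering algebra, with `bar{j,i} = bar{i,j}`. -/
def cbrBbar (Z : A) (T : ℕ → A) (nn i j : ℕ) : A :=
  if i < j then Z ^ (j - i) *
    (tUp T j (nn - 1) * tUp T i (nn - 2) * T nn * T (nn - 1) * T nn
      * tDown T (nn - 2) i * tDown T (nn - 1) j)
  else if j < i then Z ^ (i - j) *
    (tUp T i (nn - 1) * tUp T j (nn - 2) * T nn * T (nn - 1) * T nn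
      * tDown T (nn - 2) j * tDown T (nn - 1) i)
  else 0

/-- `bar{i,j}` of type `D_n` in the covering algebra, with `bar{j,i} = bar{i,j}`. -/
def cbrDbar (Z : A) (T : ℕ → A) (nn i j : ℕ) : A :=
  if i < j then Z ^ (j - i - 1) *
    (tUp T j (nn - 1) * tUp T i (nn - 2) * T nn * tDown T (nn - 2) i * tDown T (nn - 1) j)
  else if j < i then Z ^ (i - j - 1) *
    (tUp T i (nn - 1) * tUp T j (nn - 2) * T nn * tDown T (nn - 2) j * tDown T (nn - 1) i)
  else 0

/-- `{i} = z^{n-i} t_i ⋯ t_{n-1} t_n t_{n-1} ⋯ t_i` in the covering algebra of type `B_n`. -/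
def cbrBi (Z : A) (T : ℕ → A) (nn i : ℕ) : A :=
  Z ^ (nn - i) * (tUp T i (nn - 1) * T nn * tDown T (nn - 1) i)

/-- `β_i = (c_i - c_{i+1})/√2` for `1 ≤ i ≤ n-1`, given the Clifford generators `c`. -/
def betaAof {n : ℕ} (c : Fin n → A) (a : Fin (n - 1)) : A :=
  ((Real.sqrt 2 : ℂ))⁻¹ • (c ⟨a.val, by have := a.isLt; omega⟩
      - c ⟨a.val + 1, by have := a.isLt; omega⟩)

/-- `β_i` of type `B_n`: `(c_i - c_{i+1})/√2` for `i ≤ n-1`, and `β_n = c_n`. -/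
def betaBof {n : ℕ} (c : Fin n → A) (a : Fin n) : A :=
  if h : (a : ℕ) + 1 < n then ((Real.sqrt 2 : ℂ))⁻¹ • (c a - c ⟨a.val + 1, h⟩) else c a

/-- `β_i` of type `D_n`: `(c_i - c_{i+1})/√2` for `i ≤ n-1`, and `β_n = (c_{n-1} + c_n)/√2`. -/
def betaDof {n : ℕ} (c : Fin n → A) (a : Fin n) : A :=
  if h : (a : ℕ) + 1 < n then ((Real.sqrt 2 : ℂ))⁻¹ • (c a - c ⟨a.val + 1, h⟩)
  else ((Real.sqrt 2 : ℂ))⁻¹ • (c ⟨n - 2, by have := a.isLt; omega⟩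
      + c ⟨n - 1, by have := a.isLt; omega⟩)

end TWords

/-- The simple reflections of `S_n` (type `A_{n-1}`): `s_i = (i, i+1)`. -/
def simpleA {n : ℕ} (a : Fin (n - 1)) : Equiv.Perm (Fin n) :=
  Equiv.swap ⟨a.val, by have := a.isLt; omega⟩ ⟨a.val + 1, by have := a.isLt; omega⟩

/-- The simple reflections of `W_{B_n}`: `s_i = (i, i+1)` for `i ≤ n-1` and `s_n = τ_n`. -/
def simpleB {n : ℕ} (a : Fin n) : WB n :=
  if h : (a : ℕ) + 1 < n then sB a ⟨a.val + 1, h⟩ else tauB a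

/-- The simple reflections of `W_{D_n}`: `s_i = (i, i+1)` for `i ≤ n-1` and
`s_n = s̄_{n-1,n}`. -/
def simpleD {n : ℕ} (a : Fin n) : WDsub n :=
  if h : (a : ℕ) + 1 < n then sD a ⟨a.val + 1, h⟩
  else sbarD ⟨n - 2, by have := a.isLt; omega⟩ ⟨n - 1, by have := a.isLt; omega⟩

/-- Generators of the super tensor product `C_n ⊗ ℂW⁻`: Clifford generators `c_i` and the
odd generators `t_a` of the spin Weyl group algebra. -/
inductive TCGen (n m : ℕ) : Type
  | c : Fin n → TCGen n m
  | t : Fin m → TCGen n m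

abbrev TCF (n m : ℕ) := FreeAlgebra ℂ (TCGen n m)

def tcC {n m : ℕ} (i : Fin n) : TCF n m := FreeAlgebra.ι ℂ (TCGen.c i)
def tcT {n m : ℕ} (a : Fin m) : TCF n m := FreeAlgebra.ι ℂ (TCGen.t a)

/-- `t_k` for a 1-based index `k`, extended by `1` out of range. -/
def tcTn {n m : ℕ} (k : ℕ) : TCF n m := if h : 1 ≤ k ∧ k ≤ m then tcT ⟨k - 1, by omega⟩ else 1
/-- The defining relations of the super tensor product `C_n ⊗ ℂW⁻` of type `A_{n-1}`:
the Clifford relations, the spin Weyl group algebra relations, and the anticommutation of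
the odd generators `c_i` and `t_a`. -/
inductive TCRelA (n : ℕ) : TCF n (n - 1) → TCF n (n - 1) → Prop
  | csq (i : Fin n) : TCRelA n (tcC i * tcC i) 1
  | canti {i j : Fin n} (h : i ≠ j) : TCRelA n (tcC i * tcC j) (-(tcC j * tcC i))
  | ct (i : Fin n) (a : Fin (n - 1)) : TCRelA n (tcC i * tcT a) (-(tcT a * tcC i))
  | tsq (a : Fin (n - 1)) : TCRelA n (tcT a * tcT a) 1
  | tbraid (a b : Fin (n - 1)) (h : (b : ℕ) = (a : ℕ) + 1) :
      TCRelA n (tcT a * tcT b * tcT a) (tcT b * tcT a * tcT b)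
  | tfar (a b : Fin (n - 1)) (h : (a : ℕ) + 1 < (b : ℕ)) :
      TCRelA n (tcT a * tcT b * tcT a * tcT b) (-1)

/-- The super tensor product `C_n ⊗ ℂW⁻` of type `A_{n-1}`. -/
abbrev TCA (n : ℕ) := RingQuot (TCRelA n)

def qtcCA {n : ℕ} : Fin n → TCA n :=
  fun i => RingQuot.mkAlgHom ℂ (TCRelA n) (tcC i)
def qtcTA {n : ℕ} : Fin (n - 1) → TCA n :=
  fun a => RingQuot.mkAlgHom ℂ (TCRelA n) (tcT a)
/-- `t_k` (1-based) in `C_n ⊗ ℂW⁻` of type `A_{n-1}`. -/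
def qtcTnA {n : ℕ} (k : ℕ) : TCA n :=
  RingQuot.mkAlgHom ℂ (TCRelA n) (tcTn k)
/-- The defining relations of the super tensor product `C_n ⊗ ℂW⁻` of type `B_n`:
the Clifford relations, the spin Weyl group algebra relations, and the anticommutation of
the odd generators `c_i` and `t_a`. -/
inductive TCRelB (n : ℕ) : TCF n n → TCF n n → Prop
  | csq (i : Fin n) : TCRelB n (tcC i * tcC i) 1
  | canti {i j : Fin n} (h : i ≠ j) : TCRelB n (tcC i * tcC j) (-(tcC j * tcC i))
  | ct (i : Fin n) (a : Fin n) : TCRelB n (tcC i * tcT a) (-(tcT a * tcC i))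
  | tsq (a : Fin n) : TCRelB n (tcT a * tcT a) 1
  | tbraid (a b : Fin n) (h : (b : ℕ) = (a : ℕ) + 1) (h2 : (b : ℕ) + 1 < n) :
      TCRelB n (tcT a * tcT b * tcT a) (tcT b * tcT a * tcT b)
  | tfar (a b : Fin n) (h : (a : ℕ) + 1 < (b : ℕ)) (h2 : (b : ℕ) + 1 < n) :
      TCRelB n (tcT a * tcT b * tcT a * tcT b) (-1)
  | tfarn (a b : Fin n) (h : (a : ℕ) + 2 < n) (hb : (b : ℕ) + 1 = n) :
      TCRelB n (tcT a * tcT b * tcT a * tcT b) (-1)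
  | tquad (a b : Fin n) (ha : (a : ℕ) + 2 = n) (hb : (b : ℕ) + 1 = n) :
      TCRelB n ((tcT a * tcT b) ^ 4) (-1)

/-- The super tensor product `C_n ⊗ ℂW⁻` of type `B_n`. -/
abbrev TCB (n : ℕ) := RingQuot (TCRelB n)

def qtcCB {n : ℕ} : Fin n → TCB n :=
  fun i => RingQuot.mkAlgHom ℂ (TCRelB n) (tcC i)
def qtcTB {n : ℕ} : Fin n → TCB n :=
  fun a => RingQuot.mkAlgHom ℂ (TCRelB n) (tcT a)
/-- `t_k` (1-based) in `C_n ⊗ ℂW⁻` of type `B_n`. -/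
def qtcTnB {n : ℕ} (k : ℕ) : TCB n :=
  RingQuot.mkAlgHom ℂ (TCRelB n) (tcTn k)
/-- The defining relations of the super tensor product `C_n ⊗ ℂW⁻` of type `D_n`:
the Clifford relations, the spin Weyl group algebra relations, and the anticommutation of
the odd generators `c_i` and `t_a`. -/
inductive TCRelD (n : ℕ) : TCF n n → TCF n n → Prop
  | csq (i : Fin n) : TCRelD n (tcC i * tcC i) 1
  | canti {i j : Fin n} (h : i ≠ j) : TCRelD n (tcC i * tcC j) (-(tcC j * tcC i))
  | ct (i : Fin n) (a : Fin n) : TCRelD n (tcC i * tcT a) (-(tcT a * tcC i))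
  | tsq (a : Fin n) : TCRelD n (tcT a * tcT a) 1
  | tbraid (a b : Fin n) (h : (b : ℕ) = (a : ℕ) + 1) (h2 : (b : ℕ) + 1 < n) :
      TCRelD n (tcT a * tcT b * tcT a) (tcT b * tcT a * tcT b)
  | tfar (a b : Fin n) (h : (a : ℕ) + 1 < (b : ℕ)) (h2 : (b : ℕ) + 1 < n) :
      TCRelD n (tcT a * tcT b * tcT a * tcT b) (-1)
  | tfarn (a b : Fin n) (h1 : (a : ℕ) + 3 ≠ n) (h2 : (a : ℕ) + 1 < n)
      (hb : (b : ℕ) + 1 = n) : TCRelD n (tcT a * tcT b * tcT a * tcT b) (-1)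
  | tbraidn (a b : Fin n) (ha : (a : ℕ) + 3 = n) (hb : (b : ℕ) + 1 = n) :
      TCRelD n (tcT a * tcT b * tcT a) (tcT b * tcT a * tcT b)

/-- The super tensor product `C_n ⊗ ℂW⁻` of type `D_n`. -/
abbrev TCD (n : ℕ) := RingQuot (TCRelD n)

def qtcCD {n : ℕ} : Fin n → TCD n :=
  fun i => RingQuot.mkAlgHom ℂ (TCRelD n) (tcC i)
def qtcTD {n : ℕ} : Fin n → TCD n :=
  fun a => RingQuot.mkAlgHom ℂ (TCRelD n) (tcT a)
/-- `t_k` (1-based) in `C_n ⊗ ℂW⁻` of type `D_n`. -/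
def qtcTnD {n : ℕ} (k : ℕ) : TCD n :=
  RingQuot.mkAlgHom ℂ (TCRelD n) (tcTn k)

set_option linter.unusedSectionVars false

section WordLemmas

variable {A : Type} [Ring A] [Algebra ℂ A] (T : ℕ → A)

lemma tUp_empty {i j : ℕ} (h : j < i) : tUp T i j = 1 := by
  unfold tUp; rw [show j + 1 - i = 0 by omega]; simp

lemma tUp_single (i : ℕ) : tUp T i i = T i := by
  unfold tUp; rw [show i + 1 - i = 1 by omega]; simp

lemma tUp_concat {i j : ℕ} (h : i ≤ j + 1) : tUp T i (j + 1) = tUp T i j * T (j + 1) := by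
  unfold tUp
  rw [show j + 1 + 1 - i = (j + 1 - i) + 1 by omega, List.range'_concat]
  rw [show i + 1 * (j + 1 - i) = j + 1 by omega]
  simp

lemma tUp_cons {i j : ℕ} (h : i ≤ j) : tUp T i j = T i * tUp T (i + 1) j := by
  unfold tUp
  rw [show j + 1 - i = (j - i) + 1 by omega, List.range'_succ]
  rw [show j + 1 - (i + 1) = j - i by omega]
  simp

lemma tDown_empty {i j : ℕ} (h : i < j) : tDown T i j = 1 := by
  unfold tDown; rw [show i + 1 - j = 0 by omega]; simp

lemma tDown_single (i : ℕ) : tDown T i i = T i := by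
  unfold tDown; rw [show i + 1 - i = 1 by omega]; simp

lemma tDown_cons {i j : ℕ} (h : j ≤ i + 1) : tDown T (i + 1) j = T (i + 1) * tDown T i j := by
  unfold tDown
  rw [show i + 1 + 1 - j = (i + 1 - j) + 1 by omega, List.range'_concat]
  rw [show j + 1 * (i + 1 - j) = i + 1 by omega]
  simp

lemma tDown_concat {i j : ℕ} (h : j ≤ i) : tDown T i j = tDown T i (j + 1) * T j := by
  unfold tDown
  rw [show i + 1 - j = (i - j) + 1 by omega, List.range'_succ]
  rw [show i + 1 - (j + 1) = i - j by omega]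
  simp

lemma brK_base (i : ℕ) : brK T i (i + 1) = T i := by
  unfold brK
  rw [if_pos (by omega : i < i + 1)]
  rw [show i + 1 - 1 = i by omega, show i + 1 - i - 1 = 0 by omega]
  rw [tDown_single, tUp_empty T (by omega)]
  simp

lemma brK_succ {i j : ℕ} (h : i < j) : brK T i (j + 1) = -(T j * brK T i j * T j) := by
  obtain ⟨m, rfl⟩ : ∃ m, j = m + 1 := ⟨j - 1, by omega⟩
  unfold brK
  rw [if_pos (by omega : i < m + 1 + 1), if_pos h]
  rw [show m + 1 + 1 - 1 = m + 1 by omega, show m + 1 - 1 = m by omega]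
  rw [show m + 1 + 1 - i - 1 = (m + 1 - i - 1) + 1 by omega]
  rw [tDown_cons T (by omega : i ≤ m + 1), tUp_concat T (by omega : i + 1 ≤ m + 1)]
  simp only [pow_succ, mul_neg_one, neg_smul, mul_smul_comm, smul_mul_assoc, neg_inj]
  congr 1
  noncomm_ring

lemma brK_antisymm {i j : ℕ} (h : i < j) : brK T j i = -brK T i j := by
  unfold brK
  rw [if_neg (by omega : ¬ j < i), if_pos h, if_pos h]

end WordLemmas
section WordLemmas2

variable {A : Type} [Ring A] [Algebra ℂ A] (T : ℕ → A)

lemma brDbar_comm (nn : ℕ) {i j : ℕ} (h : i < j) : brDbar T nn j i = brDbar T nn i j := by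
  unfold brDbar
  rw [if_neg (by omega : ¬ j < i), if_pos h, if_pos h]

lemma brBbar_comm (nn : ℕ) {i j : ℕ} (h : i < j) : brBbar T nn j i = brBbar T nn i j := by
  unfold brBbar
  rw [if_neg (by omega : ¬ j < i), if_pos h, if_pos h]

lemma brDbar_base {nn : ℕ} (h : 2 ≤ nn) : brDbar T nn (nn - 1) nn = T nn := by
  unfold brDbar
  rw [if_pos (by omega : nn - 1 < nn)]
  rw [show nn - (nn - 1) - 1 = 0 by omega]
  rw [tUp_empty T (by omega), tUp_empty T (by omega), tDown_empty T (by omega),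
    tDown_empty T (by omega)]
  simp

lemma brBbar_base {nn : ℕ} (h : 2 ≤ nn) :
    brBbar T nn (nn - 1) nn = -(T nn * T (nn - 1) * T nn) := by
  unfold brBbar
  rw [if_pos (by omega : nn - 1 < nn)]
  rw [show nn - (nn - 1) = 1 by omega]
  rw [tUp_empty T (by omega), tUp_empty T (by omega), tDown_empty T (by omega),
    tDown_empty T (by omega)]
  simp [mul_assoc]

lemma brDbar_stepi {nn i : ℕ} (h1 : 1 ≤ i) (h2 : i + 1 < nn) :
    brDbar T nn i nn = -(T i * brDbar T nn (i + 1) nn * T i) := by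
  unfold brDbar
  rw [if_pos (by omega : i < nn), if_pos (by omega : i + 1 < nn)]
  rw [tDown_empty T (show nn - 1 < nn by omega), tUp_empty T (show nn - 1 < nn by omega)]
  rw [tUp_cons T (by omega : i ≤ nn - 2), tDown_concat T (by omega : i ≤ nn - 2)]
  rw [show nn - i - 1 = (nn - (i + 1) - 1) + 1 by omega, pow_succ]
  simp only [pow_succ, mul_neg_one, neg_smul, mul_smul_comm, smul_mul_assoc, neg_inj, mul_one,
    one_mul]
  congr 1
  noncomm_ring

lemma brBbar_stepi {nn i : ℕ} (h1 : 1 ≤ i) (h2 : i + 1 < nn) :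
    brBbar T nn i nn = -(T i * brBbar T nn (i + 1) nn * T i) := by
  unfold brBbar
  rw [if_pos (by omega : i < nn), if_pos (by omega : i + 1 < nn)]
  rw [tDown_empty T (show nn - 1 < nn by omega), tUp_empty T (show nn - 1 < nn by omega)]
  rw [tUp_cons T (by omega : i ≤ nn - 2), tDown_concat T (by omega : i ≤ nn - 2)]
  rw [show nn - i = (nn - (i + 1)) + 1 by omega, pow_succ]
  simp only [pow_succ, mul_neg_one, neg_smul, mul_smul_comm, smul_mul_assoc, neg_inj, mul_one,
    one_mul]
  congr 1
  noncomm_ring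

lemma brDbar_stepj {nn i j : ℕ} (h1 : i < j) (h2 : j < nn) :
    brDbar T nn i j = -(T j * brDbar T nn i (j + 1) * T j) := by
  unfold brDbar
  rw [if_pos (by omega : i < j), if_pos (by omega : i < j + 1)]
  rw [tUp_cons T (by omega : j ≤ nn - 1)]
  rw [show tDown T (nn - 1) j = tDown T (nn - 1) (j + 1) * T j from
    tDown_concat T (by omega : j ≤ nn - 1)]
  rw [show j + 1 - i - 1 = (j - i - 1) + 1 by omega, pow_succ]
  simp only [pow_succ, mul_neg_one, neg_smul, mul_smul_comm, smul_mul_assoc, neg_inj]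
  congr 1
  noncomm_ring

lemma brBbar_stepj {nn i j : ℕ} (h1 : i < j) (h2 : j < nn) :
    brBbar T nn i j = -(T j * brBbar T nn i (j + 1) * T j) := by
  unfold brBbar
  rw [if_pos (by omega : i < j), if_pos (by omega : i < j + 1)]
  rw [tUp_cons T (by omega : j ≤ nn - 1)]
  rw [show tDown T (nn - 1) j = tDown T (nn - 1) (j + 1) * T j from
    tDown_concat T (by omega : j ≤ nn - 1)]
  rw [show j + 1 - i = (j - i) + 1 by omega, pow_succ]
  simp only [pow_succ, mul_neg_one, neg_smul, mul_smul_comm, smul_mul_assoc, neg_inj]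
  congr 1
  noncomm_ring

lemma brBi_base {nn : ℕ} (h : 1 ≤ nn) : brBi T nn nn = T nn := by
  unfold brBi
  rw [tUp_empty T (show nn - 1 < nn by omega), tDown_empty T (show nn - 1 < nn by omega)]
  simp

lemma brBi_step {nn i : ℕ} (h1 : 1 ≤ i) (h2 : i < nn) :
    brBi T nn i = -(T i * brBi T nn (i + 1) * T i) := by
  unfold brBi
  rcases Nat.lt_or_ge (i + 1) nn with h3 | h3
  · rw [tUp_cons T (by omega : i ≤ nn - 1)]
    rw [show tDown T (nn - 1) i = tDown T (nn - 1) (i + 1) * T i from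
      tDown_concat T (by omega : i ≤ nn - 1)]
    rw [show nn - i = (nn - (i + 1)) + 1 by omega, pow_succ]
    simp only [pow_succ, mul_neg_one, neg_smul, mul_smul_comm, smul_mul_assoc, neg_inj]
    congr 1
    noncomm_ring
  · have e1 : nn - 1 = i := by omega
    rw [e1, tUp_single, tDown_single, show nn - i = 1 by omega,
      show nn - (i + 1) = 0 by omega]
    rw [tUp_empty T (by omega : i < i + 1), tDown_empty T (by omega : i < i + 1)]
    simp [mul_assoc]

end WordLemmas2
section AntiC

variable {n : ℕ} {A : Type} [Ring A] [Algebra ℂ A]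

/-- `y` anticommutes with all the Clifford generators. -/
def AntiC (c : Fin n → A) (y : A) : Prop := ∀ r, c r * y = -(y * c r)

variable {c : Fin n → A}

lemma AntiC.neg {y : A} (h : AntiC c y) : AntiC c (-y) := fun r => by
  rw [mul_neg, h r]; noncomm_ring

lemma AntiC.smul {y : A} (h : AntiC c y) (z : ℂ) : AntiC c (z • y) := fun r => by
  rw [mul_smul_comm, h r, smul_neg, smul_mul_assoc]

lemma AntiC.conj {t y : A} (ht : AntiC c t) (hy : AntiC c y) : AntiC c (t * y * t) := fun r => by
  have h1 : c r * (t * y * t) = -(t * (c r * y) * t) := by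
    rw [show c r * (t * y * t) = (c r * t) * (y * t) by noncomm_ring, ht r]
    noncomm_ring
  rw [h1, hy r]
  have h2 : c r * t = -(t * c r) := ht r
  calc -(t * (-(y * c r)) * t) = t * (y * (c r * t)) := by noncomm_ring
    _ = t * (y * (-(t * c r))) := by rw [h2]
    _ = -(t * y * t * c r) := by noncomm_ring

/-- A linear combination `z • (c a + e • c b)` anticommutes with an `AntiC` element. -/
lemma AntiC.comb {y : A} (h : AntiC c y) (z e : ℂ) (a b : Fin n) :
    (z • (c a + e • c b)) * y = -(y * (z • (c a + e • c b))) := by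
  have := h a; have := h b
  simp only [smul_mul_assoc, mul_smul_comm, add_mul, mul_add, h a, h b]
  module

lemma AntiC.comb_sub {y : A} (h : AntiC c y) (z : ℂ) (a b : Fin n) :
    (z • (c a - c b)) * y = -(y * (z • (c a - c b))) := by
  simp only [smul_mul_assoc, mul_smul_comm, sub_mul, mul_sub, h a, h b]
  module

/-- square of `β`-type element. -/
lemma beta_sq (hc2 : ∀ i, c i * c i = 1) (hcc : ∀ i j : Fin n, i ≠ j → c i * c j = -(c j * c i))
    {a b : Fin n} (hab : a ≠ b) {e : ℂ} (he : e * e = 1) :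
    (((Real.sqrt 2 : ℂ))⁻¹ • (c a + e • c b)) * (((Real.sqrt 2 : ℂ))⁻¹ • (c a + e • c b)) = 1 := by
  have hs : ((Real.sqrt 2 : ℝ) : ℂ) * ((Real.sqrt 2 : ℝ) : ℂ) = 2 := by
    rw [← Complex.ofReal_mul, Real.mul_self_sqrt (by norm_num)]
    norm_num
  have h2 : ((Real.sqrt 2 : ℂ))⁻¹ * ((Real.sqrt 2 : ℂ))⁻¹ = (2 : ℂ)⁻¹ := by
    rw [← mul_inv, hs]
  have expand : (c a + e • c b) * (c a + e • c b) = (2 : ℂ) • (1 : A) := by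
    rw [add_mul, mul_add, mul_add, hc2 a, mul_smul_comm, smul_mul_assoc, smul_mul_assoc,
      mul_smul_comm, hc2 b, hcc a b hab]
    rw [smul_smul e e, he]
    module
  calc (((Real.sqrt 2 : ℂ))⁻¹ • (c a + e • c b)) * (((Real.sqrt 2 : ℂ))⁻¹ • (c a + e • c b))
      = (((Real.sqrt 2 : ℂ))⁻¹ * ((Real.sqrt 2 : ℂ))⁻¹) •
          ((c a + e • c b) * (c a + e • c b)) := by
        rw [smul_mul_assoc, mul_smul_comm, smul_smul]
    _ = 1 := by rw [h2, expand, smul_smul]; norm_num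

lemma beta_sq_sub (hc2 : ∀ i, c i * c i = 1)
    (hcc : ∀ i j : Fin n, i ≠ j → c i * c j = -(c j * c i)) {a b : Fin n} (hab : a ≠ b) :
    (((Real.sqrt 2 : ℂ))⁻¹ • (c a - c b)) * (((Real.sqrt 2 : ℂ))⁻¹ • (c a - c b)) = 1 := by
  have := beta_sq hc2 hcc hab (e := -1) (by norm_num)
  simpa [neg_one_smul, sub_eq_add_neg] using this

/-- Core conjugation identity: `(βt) W (βt) = t W t`. -/
lemma conj_core {β t W : A} (hβ2 : β * β = 1) (hβt : β * t = -(t * β))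
    (hβW : β * W = -(W * β)) : (β * t) * W * (β * t) = t * W * t := by
  have hWβ : W * β = -(β * W) := by rw [hβW, neg_neg]
  calc (β * t) * W * (β * t) = β * (t * (W * β) * t) := by noncomm_ring
    _ = β * (t * (-(β * W)) * t) := by rw [hWβ]
    _ = -((β * (t * β)) * (W * t)) := by noncomm_ring
    _ = -((β * (-(β * t))) * (W * t)) := by
        rw [show t * β = -(β * t) from by rw [hβt, neg_neg]]
    _ = (β * β) * (t * (W * t)) := by noncomm_ring
    _ = t * W * t := by rw [hβ2]; noncomm_ring

/-- Scalar version used in each conjugation step of the induction. -/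
lemma conj_step {β t W : A} (z : ℂ) (hβ2 : β * β = 1) (hβt : β * t = -(t * β))
    (hβW : β * W = -(W * β)) :
    (-(Complex.I • (β * t))) * (z • W) * (-(Complex.I • (β * t)))
      = z • (-(t * W * t)) := by
  have key := conj_core hβ2 hβt hβW
  have h1 : (-(Complex.I • (β * t))) * (z • W) * (-(Complex.I • (β * t)))
      = (Complex.I * (z * Complex.I)) • ((β * t) * (W * (β * t))) := by
    simp only [neg_mul, mul_neg, neg_neg, smul_neg, smul_mul_assoc, mul_smul_comm,
      smul_smul, mul_assoc]
  rw [h1, show (β * t) * (W * (β * t)) = t * W * t from by rw [← key]; noncomm_ring]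
  rw [smul_neg, ← neg_smul]
  congr 1
  have h3 : Complex.I * (z * Complex.I) = (Complex.I * Complex.I) * z := by ring
  rw [h3, Complex.I_mul_I]
  ring

end AntiC

section SmashLemmas

variable {n : ℕ} {G : Type} [Group G] {act : G → Fin n → ℂ × Fin n}

lemma kG_mul (w w' : G) : kG act w * kG act w' = kG act (w * w') := by
  unfold kG
  rw [← map_mul]
  exact RingQuot.mkAlgHom_rel ℂ (KRel.gmul w w')

lemma kG_kC (w : G) (i : Fin n) :
    kG act w * kC act i = (act w i).1 • (kC act (act w i).2 * kG act w) := by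
  unfold kG kC
  rw [← map_mul, RingQuot.mkAlgHom_rel ℂ (KRel.gc w i)]
  simp only [map_smul, map_mul]

lemma kG_comm_sub {s : G} {i k i' k' : Fin n} (hsk : act s k = (1, k'))
    (hsi : act s i = (1, i')) :
    kG act s * (kC act k - kC act i) = (kC act k' - kC act i') * kG act s := by
  rw [mul_sub, sub_mul, kG_kC, kG_kC, hsk, hsi]
  simp

lemma kG_comm_add {s : G} {i k i' k' : Fin n} (hsk : act s k = (1, k'))
    (hsi : act s i = (1, i')) :
    kG act s * (kC act k + kC act i) = (kC act k' + kC act i') * kG act s := by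
  rw [mul_add, add_mul, kG_kC, kG_kC, hsk, hsi]
  simp

lemma kG_comm_single {s : G} {i i' : Fin n} (hsi : act s i = (1, i')) :
    kG act s * kC act i = kC act i' * kG act s := by
  rw [kG_kC, hsi]
  simp

/-- Conjugation in the smash product. -/
lemma smash_conj {s : G} {X X' : Smash n G act} (w : G)
    (hX : kG act s * X = X' * kG act s) :
    kG act s * (X * kG act w) * kG act s = X' * kG act (s * w * s) := by
  calc kG act s * (X * kG act w) * kG act s
      = (kG act s * X) * (kG act w * kG act s) := by noncomm_ring
    _ = X' * (kG act s * (kG act w * kG act s)) := by rw [hX]; noncomm_ring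
    _ = X' * kG act (s * w * s) := by rw [kG_mul, kG_mul, mul_assoc]

end SmashLemmas
lemma conj_step_neg {A : Type} [Ring A] [Algebra ℂ A] {β t W : A} (z : ℂ) (hβ2 : β * β = 1)
    (hβt : β * t = -(t * β)) (hβW : β * W = -(W * β)) :
    (-(Complex.I • (β * t))) * (-(z • W)) * (-(Complex.I • (β * t)))
      = -(z • (-(t * W * t))) := by
  rw [show -(z • W) = (-z) • W from by rw [neg_smul], conj_step (-z) hβ2 hβt hβW, neg_smul]

section GenericInd

variable {n : ℕ} {G : Type} [Group G] {act : G → Fin n → ℂ × Fin n}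
variable {A : Type} [Ring A] [Algebra ℂ A]

lemma generic_brK (Φ : Smash n G act →ₐ[ℂ] A) (c : Fin n → A) (T : ℕ → A)
    (hc2 : ∀ i, c i * c i = 1)
    (hcc : ∀ i j : Fin n, i ≠ j → c i * c j = -(c j * c i))
    (hTanti : ∀ k, 1 ≤ k → k + 1 ≤ n → AntiC c (T k))
    (hΦc : ∀ i, Φ (kC act i) = c i)
    (s : ℕ → G) (σ : Fin n → Fin n → G)
    (hsw : ∀ (a b : Fin n), (b : ℕ) = (a : ℕ) + 1 → act (s (a : ℕ)) a = (1, b))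
    (hsw' : ∀ (a b : Fin n), (b : ℕ) = (a : ℕ) + 1 → act (s (a : ℕ)) b = (1, a))
    (hfix : ∀ (a : ℕ) (i : Fin n), a + 1 < n → (i : ℕ) ≠ a → (i : ℕ) ≠ a + 1 →
      act (s a) i = (1, i))
    (hσbase : ∀ (i k : Fin n), (k : ℕ) = (i : ℕ) + 1 → σ i k = s (i : ℕ))
    (hσstep : ∀ (i k k' : Fin n), (i : ℕ) < (k : ℕ) → (k' : ℕ) = (k : ℕ) + 1 →
      σ i k' = s (k : ℕ) * σ i k * s (k : ℕ))
    (hΦs : ∀ (a b : Fin n), (b : ℕ) = (a : ℕ) + 1 → Φ (kG act (s (a : ℕ))) =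
      -(Complex.I • ((((Real.sqrt 2 : ℂ))⁻¹ • (c a - c b)) * T ((a : ℕ) + 1)))) :
    ∀ (i k : Fin n), (i : ℕ) < (k : ℕ) →
      Φ ((kC act k - kC act i) * kG act (σ i k))
        = ((Real.sqrt 2 : ℂ) * Complex.I) • brK T ((i : ℕ) + 1) ((k : ℕ) + 1) := by
  -- anticommutation of the bracket words
  have hanti : ∀ (j : ℕ) (i : Fin n), (i : ℕ) + 1 < j → j ≤ n → AntiC c (brK T ((i : ℕ) + 1) j) := by
    intro j
    induction j with
    | zero => omega
    | succ j ih =>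
      intro i h1 h2
      rcases Nat.lt_or_ge ((i : ℕ) + 1) j with h | h
      · rw [brK_succ T h]
        exact (AntiC.conj (hTanti j (by omega) (by omega)) (ih i h (by omega))).neg
      · have : j = (i : ℕ) + 1 := by omega
        subst this
        rw [brK_base]
        exact hTanti ((i : ℕ) + 1) (by omega) (by omega)
  have main : ∀ d (i k : Fin n), (k : ℕ) = (i : ℕ) + 1 + d →
      Φ ((kC act k - kC act i) * kG act (σ i k))
        = ((Real.sqrt 2 : ℂ) * Complex.I) • brK T ((i : ℕ) + 1) ((k : ℕ) + 1) := by
    intro d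
    induction d with
    | zero =>
      intro i k hk
      have hik : i ≠ k := by
        intro h; rw [h] at hk; omega
      rw [hσbase i k (by omega), map_mul, map_sub, hΦc, hΦc, hΦs i k (by omega)]
      rw [show (k : ℕ) + 1 = ((i : ℕ) + 1) + 1 by omega, brK_base]
      have hb2 := beta_sq_sub hc2 hcc hik
      set β : A := ((Real.sqrt 2 : ℂ))⁻¹ • (c i - c k) with hβdef
      have hck : c k - c i = -((Real.sqrt 2 : ℂ) • β) := by
        rw [hβdef, smul_smul, mul_inv_cancel₀ (by
          simpa using Real.sqrt_ne_zero'.mpr (by norm_num : (0:ℝ) < 2)), one_smul, neg_sub]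
      rw [hck]
      calc -((Real.sqrt 2 : ℂ) • β) * -(Complex.I • (β * T ((i : ℕ) + 1)))
          = (Complex.I * (Real.sqrt 2 : ℂ)) • (β * (β * T ((i : ℕ) + 1))) := by
            simp only [neg_mul_neg, smul_mul_assoc, mul_smul_comm, smul_smul, mul_assoc]
        _ = ((Real.sqrt 2 : ℂ) * Complex.I) • T ((i : ℕ) + 1) := by
            rw [← mul_assoc β β, hb2, one_mul, mul_comm Complex.I]
    | succ d ih =>
      intro i k' hk'
      have hkb : (i : ℕ) + 1 + d < n := by have := k'.isLt; omega
      set k : Fin n := ⟨(i : ℕ) + 1 + d, hkb⟩ with hkdef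
      have hkv : (k' : ℕ) = (k : ℕ) + 1 := by simp [hkdef]; omega
      have hlt : (i : ℕ) < (k : ℕ) := by simp [hkdef]; omega
      have hgrp : σ i k' = s (k : ℕ) * σ i k * s (k : ℕ) := hσstep i k k' hlt hkv
      have hcomm : kG act (s (k : ℕ)) * (kC act k - kC act i)
          = (kC act k' - kC act i) * kG act (s (k : ℕ)) :=
        kG_comm_sub (hsw k k' hkv) (hfix (k : ℕ) i (by omega) (by omega) (by omega))
      have hsm := smash_conj (act := act) (σ i k) hcomm
      rw [hgrp, ← hsm, map_mul, map_mul, hΦs k k' hkv, ih i k rfl]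
      have hβt : (((Real.sqrt 2 : ℂ))⁻¹ • (c k - c k')) * T ((k : ℕ) + 1)
          = -(T ((k : ℕ) + 1) * (((Real.sqrt 2 : ℂ))⁻¹ • (c k - c k'))) :=
        AntiC.comb_sub (hTanti ((k : ℕ) + 1) (by omega) (by omega)) _ _ _
      have hβW : (((Real.sqrt 2 : ℂ))⁻¹ • (c k - c k')) * brK T ((i : ℕ) + 1) ((k : ℕ) + 1)
          = -(brK T ((i : ℕ) + 1) ((k : ℕ) + 1) * (((Real.sqrt 2 : ℂ))⁻¹ • (c k - c k'))) :=
        AntiC.comb_sub (hanti ((k : ℕ) + 1) i (by omega) (by omega)) _ _ _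
      have hik' : k ≠ k' := by
        intro h; rw [h] at hkv; omega
      rw [conj_step _ (beta_sq_sub hc2 hcc hik') hβt hβW]
      rw [show (k' : ℕ) + 1 = ((k : ℕ) + 1) + 1 by omega,
        brK_succ T (by omega : (i : ℕ) + 1 < (k : ℕ) + 1)]
  intro i k h
  exact main ((k : ℕ) - (i : ℕ) - 1) i k (by omega)

end GenericInd
section GenericInd2

variable {n : ℕ} {G : Type} [Group G] {act : G → Fin n → ℂ × Fin n}
variable {A : Type} [Ring A] [Algebra ℂ A]

lemma generic_bar (Φ : Smash n G act →ₐ[ℂ] A) (c : Fin n → A) (T : ℕ → A)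
    (hc2 : ∀ i, c i * c i = 1)
    (hcc : ∀ i j : Fin n, i ≠ j → c i * c j = -(c j * c i))
    (hTanti : ∀ k, 1 ≤ k → k ≤ n → AntiC c (T k))
    (s : ℕ → G) (σb : Fin n → Fin n → G)
    (hsw' : ∀ (a b : Fin n), (b : ℕ) = (a : ℕ) + 1 → act (s (a : ℕ)) b = (1, a))
    (hfix : ∀ (a : ℕ) (i : Fin n), a + 1 < n → (i : ℕ) ≠ a → (i : ℕ) ≠ a + 1 →
      act (s a) i = (1, i))
    (hΦs : ∀ (a b : Fin n), (b : ℕ) = (a : ℕ) + 1 → Φ (kG act (s (a : ℕ))) =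
      -(Complex.I • ((((Real.sqrt 2 : ℂ))⁻¹ • (c a - c b)) * T ((a : ℕ) + 1))))
    (hn : 2 ≤ n)
    (Wb : ℕ → ℕ → A)
    (hWbase : ∀ (i k : Fin n), (i : ℕ) = n - 2 → (k : ℕ) = n - 1 →
      Φ ((kC act k + kC act i) * kG act (σb i k))
        = -(((Real.sqrt 2 : ℂ) * Complex.I) • Wb (n - 1) n))
    (hWbaseAnti : AntiC c (Wb (n - 1) n))
    (hWj : ∀ i j, 1 ≤ i → i < j → j < n → Wb i j = -(T j * Wb i (j + 1) * T j))
    (hWi : ∀ i, 1 ≤ i → i + 2 ≤ n → Wb i n = -(T i * Wb (i + 1) n * T i))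
    (hσj : ∀ (i j j' : Fin n), (i : ℕ) < (j : ℕ) → (j' : ℕ) = (j : ℕ) + 1 →
      σb i j = s (j : ℕ) * σb i j' * s (j : ℕ))
    (hσi : ∀ (i i' j : Fin n), (i' : ℕ) = (i : ℕ) + 1 → (i' : ℕ) < (j : ℕ) →
      σb i j = s (i : ℕ) * σb i' j * s (i : ℕ)) :
    ∀ (i k : Fin n), (i : ℕ) < (k : ℕ) →
      Φ ((kC act k + kC act i) * kG act (σb i k))
        = -(((Real.sqrt 2 : ℂ) * Complex.I) • Wb ((i : ℕ) + 1) ((k : ℕ) + 1)) := by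
  -- anticommutation of the bar words
  have hantiN : ∀ d (i : ℕ), 1 ≤ i → i + d = n - 1 → AntiC c (Wb i n) := by
    intro d
    induction d with
    | zero =>
      intro i h1 h2
      have : i = n - 1 := by omega
      subst this; exact hWbaseAnti
    | succ d ih =>
      intro i h1 h2
      rw [hWi i h1 (by omega)]
      exact (AntiC.conj (hTanti i h1 (by omega)) (ih (i + 1) (by omega) (by omega))).neg
  have hanti : ∀ e (i j : ℕ), 1 ≤ i → i < j → j + e = n → AntiC c (Wb i j) := by
    intro e
    induction e with
    | zero =>
      intro i j h1 h2 h3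
      rw [show j = n from by omega]
      exact hantiN (n - 1 - i) i h1 (by omega)
    | succ e ih =>
      intro i j h1 h2 h3
      rw [hWj i j h1 h2 (by omega)]
      exact (AntiC.conj (hTanti j (by omega) (by omega)) (ih i (j + 1) h1 (by omega) (by omega))).neg
  -- Stage 1: k = n-1 (0-based), downward induction on i
  have stage1 : ∀ d (i k : Fin n), (k : ℕ) = n - 1 → (i : ℕ) + d = n - 2 →
      Φ ((kC act k + kC act i) * kG act (σb i k))
        = -(((Real.sqrt 2 : ℂ) * Complex.I) • Wb ((i : ℕ) + 1) n) := by
    intro d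
    induction d with
    | zero =>
      intro i k hk hi
      rw [hWbase i k (by omega) hk, show (i : ℕ) + 1 = n - 1 by omega]
    | succ d ih =>
      intro i k hk hi
      have hi'b : (i : ℕ) + 1 < n := by omega
      obtain ⟨i', hiv⟩ : ∃ i' : Fin n, (i' : ℕ) = (i : ℕ) + 1 := ⟨⟨(i : ℕ) + 1, hi'b⟩, rfl⟩
      have hgrp : σb i k = s (i : ℕ) * σb i' k * s (i : ℕ) :=
        hσi i i' k hiv (by omega)
      have hcomm : kG act (s (i : ℕ)) * (kC act k + kC act i')
          = (kC act k + kC act i) * kG act (s (i : ℕ)) :=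
        kG_comm_add (hfix (i : ℕ) k (by omega) (by omega) (by omega)) (hsw' i i' hiv)
      have hsm := smash_conj (act := act) (σb i' k) hcomm
      rw [hgrp, ← hsm, map_mul, map_mul, hΦs i i' hiv, ih i' k hk (by omega)]
      have hβt : (((Real.sqrt 2 : ℂ))⁻¹ • (c i - c i')) * T ((i : ℕ) + 1)
          = -(T ((i : ℕ) + 1) * (((Real.sqrt 2 : ℂ))⁻¹ • (c i - c i'))) :=
        AntiC.comb_sub (hTanti ((i : ℕ) + 1) (by omega) (by omega)) _ _ _
      have hβW : (((Real.sqrt 2 : ℂ))⁻¹ • (c i - c i')) * Wb ((i' : ℕ) + 1) n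
          = -(Wb ((i' : ℕ) + 1) n * (((Real.sqrt 2 : ℂ))⁻¹ • (c i - c i'))) :=
        AntiC.comb_sub (hantiN (n - (i' : ℕ) - 2) ((i' : ℕ) + 1) (by omega) (by omega)) _ _ _
      have hik' : i ≠ i' := by
        intro h; rw [h] at hiv; omega
      rw [conj_step_neg _ (beta_sq_sub hc2 hcc hik') hβt hβW]
      rw [hWi ((i : ℕ) + 1) (by omega) (by omega), hiv]
  -- Stage 2: downward induction on k
  have stage2 : ∀ e (i k : Fin n), (i : ℕ) < (k : ℕ) → (k : ℕ) + 1 + e = n →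
      Φ ((kC act k + kC act i) * kG act (σb i k))
        = -(((Real.sqrt 2 : ℂ) * Complex.I) • Wb ((i : ℕ) + 1) ((k : ℕ) + 1)) := by
    intro e
    induction e with
    | zero =>
      intro i k hik hk
      rw [show (k : ℕ) + 1 = n from by omega]
      exact stage1 (n - 2 - (i : ℕ)) i k (by omega) (by omega)
    | succ e ih =>
      intro i k hik hk
      have hk'b : (k : ℕ) + 1 < n := by omega
      obtain ⟨k', hkv⟩ : ∃ k' : Fin n, (k' : ℕ) = (k : ℕ) + 1 := ⟨⟨(k : ℕ) + 1, hk'b⟩, rfl⟩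
      have hgrp : σb i k = s (k : ℕ) * σb i k' * s (k : ℕ) := hσj i k k' hik hkv
      have hcomm : kG act (s (k : ℕ)) * (kC act k' + kC act i)
          = (kC act k + kC act i) * kG act (s (k : ℕ)) :=
        kG_comm_add (hsw' k k' hkv) (hfix (k : ℕ) i (by omega) (by omega) (by omega))
      have hsm := smash_conj (act := act) (σb i k') hcomm
      rw [hgrp, ← hsm, map_mul, map_mul, hΦs k k' hkv,
        ih i k' (by omega) (by omega)]
      have hβt : (((Real.sqrt 2 : ℂ))⁻¹ • (c k - c k')) * T ((k : ℕ) + 1)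
          = -(T ((k : ℕ) + 1) * (((Real.sqrt 2 : ℂ))⁻¹ • (c k - c k'))) :=
        AntiC.comb_sub (hTanti ((k : ℕ) + 1) (by omega) (by omega)) _ _ _
      have hβW : (((Real.sqrt 2 : ℂ))⁻¹ • (c k - c k')) * Wb ((i : ℕ) + 1) ((k' : ℕ) + 1)
          = -(Wb ((i : ℕ) + 1) ((k' : ℕ) + 1) * (((Real.sqrt 2 : ℂ))⁻¹ • (c k - c k'))) :=
        AntiC.comb_sub (hanti (n - (k' : ℕ) - 1) ((i : ℕ) + 1) ((k' : ℕ) + 1) (by omega)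
          (by omega) (by omega)) _ _ _
      have hik' : k ≠ k' := by
        intro h; rw [h] at hkv; omega
      rw [conj_step_neg _ (beta_sq_sub hc2 hcc hik') hβt hβW]
      rw [hWj ((i : ℕ) + 1) ((k : ℕ) + 1) (by omega) (by omega) (by omega), hkv]
  intro i k h
  exact stage2 (n - 1 - (k : ℕ)) i k h (by omega)

lemma generic_tau (Φ : Smash n G act →ₐ[ℂ] A) (c : Fin n → A) (T : ℕ → A)
    (hc2 : ∀ i, c i * c i = 1)
    (hcc : ∀ i j : Fin n, i ≠ j → c i * c j = -(c j * c i))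
    (hTanti : ∀ k, 1 ≤ k → k ≤ n → AntiC c (T k))
    (s : ℕ → G) (τ : Fin n → G)
    (hsw' : ∀ (a b : Fin n), (b : ℕ) = (a : ℕ) + 1 → act (s (a : ℕ)) b = (1, a))
    (hΦs : ∀ (a b : Fin n), (b : ℕ) = (a : ℕ) + 1 → Φ (kG act (s (a : ℕ))) =
      -(Complex.I • ((((Real.sqrt 2 : ℂ))⁻¹ • (c a - c b)) * T ((a : ℕ) + 1))))
    (hn : 1 ≤ n)
    (hbase : ∀ i : Fin n, (i : ℕ) = n - 1 →
      Φ (kC act i * kG act (τ i)) = -(Complex.I • brBi T n n))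
    (hτstep : ∀ (i i' : Fin n), (i' : ℕ) = (i : ℕ) + 1 → τ i = s (i : ℕ) * τ i' * s (i : ℕ)) :
    ∀ i : Fin n, Φ (kC act i * kG act (τ i)) = -(Complex.I • brBi T n ((i : ℕ) + 1)) := by
  have hanti : ∀ d (i : ℕ), 1 ≤ i → i + d = n → AntiC c (brBi T n i) := by
    intro d
    induction d with
    | zero =>
      intro i h1 h2
      rw [show i = n from by omega, brBi_base T (by omega)]
      exact hTanti n (by omega) (le_refl _)
    | succ d ih =>
      intro i h1 h2
      rw [brBi_step T h1 (by omega)]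
      exact (AntiC.conj (hTanti i h1 (by omega)) (ih (i + 1) (by omega) (by omega))).neg
  have main : ∀ d (i : Fin n), (i : ℕ) + d = n - 1 →
      Φ (kC act i * kG act (τ i)) = -(Complex.I • brBi T n ((i : ℕ) + 1)) := by
    intro d
    induction d with
    | zero =>
      intro i hi
      rw [show (i : ℕ) + 1 = n from by omega]
      exact hbase i (by omega)
    | succ d ih =>
      intro i hi
      have hi'b : (i : ℕ) + 1 < n := by omega
      obtain ⟨i', hiv⟩ : ∃ i' : Fin n, (i' : ℕ) = (i : ℕ) + 1 := ⟨⟨(i : ℕ) + 1, hi'b⟩, rfl⟩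
      have hgrp : τ i = s (i : ℕ) * τ i' * s (i : ℕ) := hτstep i i' hiv
      have hcomm : kG act (s (i : ℕ)) * kC act i' = kC act i * kG act (s (i : ℕ)) :=
        kG_comm_single (hsw' i i' hiv)
      have hsm := smash_conj (act := act) (τ i') hcomm
      rw [hgrp, ← hsm, map_mul, map_mul, hΦs i i' hiv, ih i' (by omega)]
      have hβt : (((Real.sqrt 2 : ℂ))⁻¹ • (c i - c i')) * T ((i : ℕ) + 1)
          = -(T ((i : ℕ) + 1) * (((Real.sqrt 2 : ℂ))⁻¹ • (c i - c i'))) :=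
        AntiC.comb_sub (hTanti ((i : ℕ) + 1) (by omega) (by omega)) _ _ _
      have hβW : (((Real.sqrt 2 : ℂ))⁻¹ • (c i - c i')) * brBi T n ((i' : ℕ) + 1)
          = -(brBi T n ((i' : ℕ) + 1) * (((Real.sqrt 2 : ℂ))⁻¹ • (c i - c i'))) :=
        AntiC.comb_sub (hanti (n - (i' : ℕ) - 1) ((i' : ℕ) + 1) (by omega) (by omega)) _ _ _
      have hik' : i ≠ i' := by
        intro h; rw [h] at hiv; omega
      rw [conj_step_neg _ (beta_sq_sub hc2 hcc hik') hβt hβW]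
      rw [brBi_step T (by omega : 1 ≤ (i : ℕ) + 1) (by omega), hiv]
  intro i
  exact main (n - 1 - (i : ℕ)) i (by omega)

end GenericInd2
section TargetRels

variable {n : ℕ}

lemma qtcCA_sq (i : Fin n) : qtcCA i * qtcCA i = 1 := by
  unfold qtcCA
  rw [← map_mul, RingQuot.mkAlgHom_rel ℂ (TCRelA.csq i), map_one]

lemma qtcCA_anti {i j : Fin n} (h : i ≠ j) : qtcCA i * qtcCA j = -(qtcCA j * qtcCA i) := by
  unfold qtcCA
  rw [← map_mul, RingQuot.mkAlgHom_rel ℂ (TCRelA.canti h), map_neg, map_mul]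

lemma qtcTnA_anti (k : ℕ) (h1 : 1 ≤ k) (h2 : k + 1 ≤ n) :
    AntiC (qtcCA (n := n)) (qtcTnA k) := by
  intro r
  unfold qtcCA qtcTnA tcTn
  rw [dif_pos ⟨h1, by omega⟩]
  rw [← map_mul, RingQuot.mkAlgHom_rel ℂ (TCRelA.ct r ⟨k - 1, by omega⟩), map_neg, map_mul]

lemma qtcTnA_eq (a : Fin (n - 1)) : qtcTnA ((a : ℕ) + 1) = qtcTA a := by
  unfold qtcTnA qtcTA tcTn
  rw [dif_pos ⟨by omega, by have := a.isLt; omega⟩]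
  congr 1

lemma qtcCB_sq (i : Fin n) : qtcCB i * qtcCB i = 1 := by
  unfold qtcCB
  rw [← map_mul, RingQuot.mkAlgHom_rel ℂ (TCRelB.csq i), map_one]

lemma qtcCB_anti {i j : Fin n} (h : i ≠ j) : qtcCB i * qtcCB j = -(qtcCB j * qtcCB i) := by
  unfold qtcCB
  rw [← map_mul, RingQuot.mkAlgHom_rel ℂ (TCRelB.canti h), map_neg, map_mul]

lemma qtcTnB_anti (k : ℕ) (h1 : 1 ≤ k) (h2 : k ≤ n) :
    AntiC (qtcCB (n := n)) (qtcTnB k) := by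
  intro r
  unfold qtcCB qtcTnB tcTn
  rw [dif_pos ⟨h1, h2⟩]
  rw [← map_mul, RingQuot.mkAlgHom_rel ℂ (TCRelB.ct r ⟨k - 1, by omega⟩), map_neg, map_mul]

lemma qtcTnB_eq (a : Fin n) : qtcTnB ((a : ℕ) + 1) = qtcTB a := by
  unfold qtcTnB qtcTB tcTn
  rw [dif_pos ⟨by omega, by have := a.isLt; omega⟩]
  congr 1

lemma qtcCD_sq (i : Fin n) : qtcCD i * qtcCD i = 1 := by
  unfold qtcCD
  rw [← map_mul, RingQuot.mkAlgHom_rel ℂ (TCRelD.csq i), map_one]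

lemma qtcCD_anti {i j : Fin n} (h : i ≠ j) : qtcCD i * qtcCD j = -(qtcCD j * qtcCD i) := by
  unfold qtcCD
  rw [← map_mul, RingQuot.mkAlgHom_rel ℂ (TCRelD.canti h), map_neg, map_mul]

lemma qtcTnD_anti (k : ℕ) (h1 : 1 ≤ k) (h2 : k ≤ n) :
    AntiC (qtcCD (n := n)) (qtcTnD k) := by
  intro r
  unfold qtcCD qtcTnD tcTn
  rw [dif_pos ⟨h1, h2⟩]
  rw [← map_mul, RingQuot.mkAlgHom_rel ℂ (TCRelD.ct r ⟨k - 1, by omega⟩), map_neg, map_mul]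

lemma qtcTnD_eq (a : Fin n) : qtcTnD ((a : ℕ) + 1) = qtcTD a := by
  unfold qtcTnD qtcTD tcTn
  rw [dif_pos ⟨by omega, by have := a.isLt; omega⟩]
  congr 1

end TargetRels

section PermLemmas

variable {n : ℕ}

/-- the simple reflection as a function of a natural number index. -/
def sAn (n : ℕ) (a : ℕ) : Equiv.Perm (Fin n) :=
  if h : a + 1 < n then simpleA ⟨a, by omega⟩ else 1

lemma sAn_eq (a b : Fin n) (h : (b : ℕ) = (a : ℕ) + 1) :
    sAn n (a : ℕ) = Equiv.swap a b := by
  unfold sAn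
  rw [dif_pos (by have := b.isLt; omega)]
  unfold simpleA
  congr 1 <;> apply Fin.ext <;> simp [h.symm]

lemma swap_conj_step (i k k' : Fin n) (hik : i ≠ k) (hik' : i ≠ k') (hkk' : k ≠ k') :
    Equiv.swap i k' = Equiv.swap k k' * Equiv.swap i k * Equiv.swap k k' := by
  have h := Equiv.swap_apply_apply (Equiv.swap k k') i k
  rw [Equiv.swap_apply_of_ne_of_ne hik hik', Equiv.swap_apply_left, Equiv.swap_inv] at h
  exact h

end PermLemmas
theorem partA (n : ℕ) (Φ : Smash n (Equiv.Perm (Fin n)) (actA n) ≃ₐ[ℂ] TCA n)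
    (hc : ∀ i, Φ (kC (actA n) i) = qtcCA i)
    (hs : ∀ a : Fin (n - 1), Φ (kG (actA n) (simpleA a))
      = -(Complex.I • (betaAof qtcCA a * qtcTA a)))
    (i k : Fin n) (hik : i ≠ k) :
    Φ ((kC (actA n) k - kC (actA n) i) * kG (actA n) (Equiv.swap i k))
      = -((((Real.sqrt 2 : ℂ) * Complex.I)) • brK qtcTnA ((k : ℕ) + 1) ((i : ℕ) + 1)) := by
  have hphis : ∀ (a b : Fin n), (b : ℕ) = (a : ℕ) + 1 →
      Φ.toAlgHom (kG (actA n) (sAn n (a : ℕ)))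
        = -(Complex.I • ((((Real.sqrt 2 : ℂ))⁻¹ • (qtcCA a - qtcCA b)) * qtcTnA ((a : ℕ) + 1))) := by
    intro a b h
    have hb : (a : ℕ) + 1 < n := by have := b.isLt; omega
    have e1 : sAn n (a : ℕ) = simpleA ⟨(a : ℕ), by omega⟩ := dif_pos hb
    have e2 := hs ⟨(a : ℕ), by omega⟩
    have e3 : betaAof (qtcCA (n := n)) ⟨(a : ℕ), by omega⟩
        = ((Real.sqrt 2 : ℂ))⁻¹ • (qtcCA a - qtcCA b) := by
      unfold betaAof
      congr 2 <;> apply congrArg <;> apply Fin.ext <;> simp [h.symm]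
    have e4 : qtcTA (n := n) ⟨(a : ℕ), by omega⟩ = qtcTnA ((a : ℕ) + 1) :=
      (qtcTnA_eq ⟨(a : ℕ), by omega⟩).symm
    show Φ (kG (actA n) (sAn n (a : ℕ))) = _
    rw [e1, e2, e3, e4, smul_mul_assoc]
  have key := generic_brK (n := n) (act := actA n) Φ.toAlgHom qtcCA qtcTnA
    qtcCA_sq (fun i j h => qtcCA_anti h) qtcTnA_anti (fun i => hc i)
    (sAn n) (fun i k => Equiv.swap i k)
    (fun a b h => by rw [sAn_eq a b h]; simp [actA])
    (fun a b h => by rw [sAn_eq a b h]; simp [actA])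
    (fun a i ha h1 h2 => by
      unfold sAn
      rw [dif_pos ha]
      unfold simpleA actA
      rw [Equiv.swap_apply_of_ne_of_ne (by simp [Fin.ext_iff, h1]) (by simp [Fin.ext_iff, h2])])
    (fun i k h => (sAn_eq i k h).symm)
    (fun i k k' h1 h2 => by
      rw [sAn_eq k k' h2]
      exact swap_conj_step i k k' (by simp [Fin.ext_iff]; omega) (by simp [Fin.ext_iff]; omega)
        (by simp [Fin.ext_iff]; omega))
    hphis
  rcases Nat.lt_or_ge (i : ℕ) (k : ℕ) with h | h
  · have := key i k h
    rw [brK_antisymm qtcTnA (by omega : (i : ℕ) + 1 < (k : ℕ) + 1), smul_neg, neg_neg]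
    exact this
  · have hlt : (k : ℕ) < (i : ℕ) := by
      rcases Nat.lt_or_ge (k : ℕ) (i : ℕ) with h' | h'
      · exact h'
      · exact absurd (Fin.ext (by omega)) hik
    have := key k i hlt
    rw [show (kC (actA n) k - kC (actA n) i) * kG (actA n) (Equiv.swap i k)
      = -((kC (actA n) i - kC (actA n) k) * kG (actA n) (Equiv.swap k i)) from by
        rw [Equiv.swap_comm i k, ← neg_sub (kC (actA n) i)]; exact neg_mul (kC (actA n) i - kC (actA n) k) (kG (actA n) (Equiv.swap k i)), map_neg]
    show -(Φ.toAlgHom _) = _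
    rw [this]
section WBLemmas

variable {n : ℕ}

@[simp] lemma sB_left (x y : Fin n) : (sB x y).left = 1 := rfl
@[simp] lemma sB_right (x y : Fin n) : (sB x y).right = Equiv.swap x y := rfl
@[simp] lemma sbarB_right (x y : Fin n) : (sbarB x y).right = Equiv.swap x y := rfl
@[simp] lemma tauB_right (x : Fin n) : (tauB x).right = 1 := rfl
lemma sbarB_left (x y : Fin n) :
    (sbarB x y).left = fun k => if k = x ∨ k = y then -1 else 1 := rfl
lemma tauB_left (x : Fin n) : (tauB x).left = fun k => if k = x then -1 else 1 := rfl
lemma permAut_apply (σ : Equiv.Perm (Fin n)) (f : SignFn n) (k : Fin n) :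
    (permAut n σ) f k = f (σ.symm k) := rfl

lemma actB_sB (x y i : Fin n) : actB (sB x y) i = (1, Equiv.swap x y i) := by
  simp [actB]

lemma swap_conj_perm (u v x y : Fin n) :
    Equiv.swap u v * Equiv.swap x y * Equiv.swap u v
      = Equiv.swap (Equiv.swap u v x) (Equiv.swap u v y) := by
  have h := Equiv.swap_apply_apply (Equiv.swap u v) x y
  rw [Equiv.swap_inv] at h
  exact h.symm

lemma sB_conj_sB (u v x y : Fin n) :
    sB u v * sB x y * sB u v = sB (Equiv.swap u v x) (Equiv.swap u v y) := by
  apply SemidirectProduct.ext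
  · simp only [SemidirectProduct.mul_left, sB_left, map_one, mul_one, one_mul]
  · simp only [SemidirectProduct.mul_right, sB_right]
    exact swap_conj_perm u v x y

lemma sB_conj_sbarB (u v x y : Fin n) :
    sB u v * sbarB x y * sB u v = sbarB (Equiv.swap u v x) (Equiv.swap u v y) := by
  apply SemidirectProduct.ext
  · simp only [SemidirectProduct.mul_left, SemidirectProduct.mul_right, sB_left, sB_right,
      map_one, mul_one, one_mul]
    funext k
    simp only [permAut_apply, sbarB_left]
    simp only [Equiv.symm_swap]
    congr 1
    simp only [eq_iff_iff]
    rw [← Equiv.swap_apply_eq_iff, ← Equiv.swap_apply_eq_iff]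
  · simp only [SemidirectProduct.mul_right, sB_right, sbarB_right]
    exact swap_conj_perm u v x y

lemma sB_conj_tauB (u v x : Fin n) :
    sB u v * tauB x * sB u v = tauB (Equiv.swap u v x) := by
  apply SemidirectProduct.ext
  · simp only [SemidirectProduct.mul_left, SemidirectProduct.mul_right, sB_left, sB_right,
      map_one, mul_one, one_mul]
    funext k
    simp only [permAut_apply, tauB_left]
    simp only [Equiv.symm_swap]
    congr 1
    simp only [eq_iff_iff]
    rw [← Equiv.swap_apply_eq_iff]
  · simp only [SemidirectProduct.mul_right, sB_right, tauB_right]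
    simp [Equiv.swap_mul_self]

lemma tau_conj_sB (x y : Fin n) (h : x ≠ y) : tauB y * sB x y * tauB y = sbarB x y := by
  apply SemidirectProduct.ext
  · simp only [SemidirectProduct.mul_left, SemidirectProduct.mul_right, sB_left, sB_right,
      tauB_right, map_one, mul_one, one_mul]
    funext k
    simp only [Pi.mul_apply, permAut_apply, tauB_left, sbarB_left]
    simp only [Equiv.symm_swap]
    rcases eq_or_ne k x with rfl | hx
    · simp [h, Equiv.swap_apply_left]
    · rcases eq_or_ne k y with rfl | hy
      · simp [Ne.symm h, h, Equiv.swap_apply_right]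
      · simp [hx, hy, Equiv.swap_apply_of_ne_of_ne hx hy]
  · simp only [SemidirectProduct.mul_right, sB_right, tauB_right, sbarB_right]
    simp

end WBLemmas
section BaseCalc

variable {A : Type} [Ring A] [Algebra ℂ A]

lemma sqrt2_mul_self : ((Real.sqrt 2 : ℝ) : ℂ) * ((Real.sqrt 2 : ℝ) : ℂ) = 2 := by
  rw [← Complex.ofReal_mul, Real.mul_self_sqrt (by norm_num)]
  norm_num

lemma baseD_calc (a b u : A) (ha2 : a * a = 1) (hb2 : b * b = 1) (hab : a * b = -(b * a)) :
    (b + a) * -(Complex.I • ((((Real.sqrt 2 : ℂ))⁻¹ • (a + b)) * u))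
      = -(((Real.sqrt 2 : ℂ) * Complex.I) • u) := by
  have hba : b * a = -(a * b) := by rw [hab, neg_neg]
  have h1 : (b + a) * (a + b) = (2 : ℂ) • (1 : A) := by
    calc (b + a) * (a + b) = b * a + (b * b + (a * a + a * b)) := by noncomm_ring
      _ = -(a * b) + (1 + (1 + a * b)) := by rw [hba, hb2, ha2]
      _ = (2 : ℂ) • (1 : A) := by module
  calc (b + a) * -(Complex.I • ((((Real.sqrt 2 : ℂ))⁻¹ • (a + b)) * u))
      = -((Complex.I * ((Real.sqrt 2 : ℂ))⁻¹) • ((b + a) * (a + b) * u)) := by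
        simp only [mul_neg, mul_smul_comm, smul_mul_assoc, smul_smul, mul_assoc]
    _ = -((Complex.I * ((Real.sqrt 2 : ℂ))⁻¹) • ((2 : ℂ) • u)) := by
        rw [h1, smul_mul_assoc, one_mul]
    _ = -(((Real.sqrt 2 : ℂ) * Complex.I) • u) := by
        rw [smul_smul]
        congr 1
        rw [mul_assoc, ← sqrt2_mul_self]
        field_simp

lemma baseTau_calc (a t : A) (ha2 : a * a = 1) :
    a * -(Complex.I • (a * t)) = -(Complex.I • t) := by
  rw [mul_neg, mul_smul_comm, ← mul_assoc, ha2, one_mul]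

lemma baseB_calc (a b t u : A) (ha2 : a * a = 1) (hb2 : b * b = 1) (hab : a * b = -(b * a))
    (hat : a * t = -(t * a)) (hau : a * u = -(u * a)) (hbt : b * t = -(t * b))
    (hbu : b * u = -(u * b)) :
    (b + a) * (-(Complex.I • (b * t)) * -(Complex.I •
        ((((Real.sqrt 2 : ℂ))⁻¹ • (a - b)) * u)) * -(Complex.I • (b * t)))
      = -(((Real.sqrt 2 : ℂ) * Complex.I) • (-(t * u * t))) := by
  have hba : b * a = -(a * b) := by rw [hab, neg_neg]
  have hta : t * a = -(a * t) := by rw [hat, neg_neg]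
  have htb : t * b = -(b * t) := by rw [hbt, neg_neg]
  -- t * (a - b) = -((a-b) * t)
  have h1 : t * (a - b) = -((a - b) * t) := by
    rw [mul_sub, sub_mul, hta, htb]
    noncomm_ring
  have h2 : (1 + a * b) * (a - b) = (-2 : ℂ) • b := by
    calc (1 + a * b) * (a - b) = a - b + a * (b * a) - a * (b * b) := by noncomm_ring
      _ = a - b + a * (-(a * b)) - a * 1 := by rw [hba, hb2]
      _ = a - b - (a * a) * b - a := by noncomm_ring
      _ = a - b - 1 * b - a := by rw [ha2]
      _ = (-2 : ℂ) • b := by rw [one_mul]; module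
  -- full product, stage by stage
  have p1 : (b + a) * -(Complex.I • (b * t)) = -(Complex.I • ((1 + a * b) * t)) := by
    have e : (b + a) * (b * t) = (1 + a * b) * t := by
      rw [← mul_assoc, add_mul, hb2]
    rw [mul_neg, mul_smul_comm, e]
  have p2 : ((1 + a * b) * t) * ((((Real.sqrt 2 : ℂ))⁻¹ • (a - b)) * u)
      = ((Real.sqrt 2 : ℂ))⁻¹ • ((1 + a * b) * (t * ((a - b) * u))) := by
    simp only [smul_mul_assoc, mul_smul_comm, mul_assoc]
  have p3 : (1 + a * b) * (t * ((a - b) * u)) = ((2 : ℂ)) • (b * (t * u)) := by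
    calc (1 + a * b) * (t * ((a - b) * u)) = (1 + a * b) * ((t * (a - b)) * u) := by
          noncomm_ring
      _ = (1 + a * b) * ((-((a - b) * t)) * u) := by rw [h1]
      _ = -(((1 + a * b) * (a - b)) * (t * u)) := by noncomm_ring
      _ = -(((-2 : ℂ) • b) * (t * u)) := by rw [h2]
      _ = ((2 : ℂ)) • (b * (t * u)) := by
          rw [smul_mul_assoc, ← neg_smul]
          norm_num
  have hcore : (b * t) * u * (b * t) = t * u * t := conj_core hb2 hbt hbu
  have hne : ((Real.sqrt 2 : ℝ) : ℂ) ≠ 0 := by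
    simpa using Real.sqrt_ne_zero'.mpr (by norm_num : (0:ℝ) < 2)
  have s2i2 : ((Real.sqrt 2 : ℂ))⁻¹ * 2 = (Real.sqrt 2 : ℂ) := by
    rw [← sqrt2_mul_self, ← mul_assoc, inv_mul_cancel₀ hne, one_mul]
  have q1 : (-(Complex.I • ((1 + a * b) * t))) * (-(Complex.I •
        ((((Real.sqrt 2 : ℂ))⁻¹ • (a - b)) * u)))
      = -(((Real.sqrt 2 : ℂ)) • (b * (t * u))) := by
    have e1 : (-(Complex.I • ((1 + a * b) * t))) * (-(Complex.I •
          ((((Real.sqrt 2 : ℂ))⁻¹ • (a - b)) * u)))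
        = (Complex.I * Complex.I) • (((1 + a * b) * t) *
            ((((Real.sqrt 2 : ℂ))⁻¹ • (a - b)) * u)) := by
      rw [neg_mul_neg, smul_mul_assoc, mul_smul_comm, smul_smul]
    rw [e1, p2, p3, Complex.I_mul_I, smul_smul, smul_smul, ← neg_smul]
    congr 1
    rw [mul_assoc, s2i2]
    ring
  calc (b + a) * (-(Complex.I • (b * t)) * -(Complex.I •
        ((((Real.sqrt 2 : ℂ))⁻¹ • (a - b)) * u)) * -(Complex.I • (b * t)))
      = ((b + a) * -(Complex.I • (b * t))) * (-(Complex.I •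
        ((((Real.sqrt 2 : ℂ))⁻¹ • (a - b)) * u))) * (-(Complex.I • (b * t))) := by
        noncomm_ring
    _ = (-(Complex.I • ((1 + a * b) * t))) * (-(Complex.I •
        ((((Real.sqrt 2 : ℂ))⁻¹ • (a - b)) * u))) * (-(Complex.I • (b * t))) := by rw [p1]
    _ = (-(((Real.sqrt 2 : ℂ)) • (b * (t * u)))) * (-(Complex.I • (b * t))) := by rw [q1]
    _ = ((Real.sqrt 2 : ℂ) * Complex.I) • ((b * (t * u)) * (b * t)) := by
        rw [neg_mul_neg, smul_mul_assoc, mul_smul_comm, smul_smul]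
    _ = ((Real.sqrt 2 : ℂ) * Complex.I) • (t * u * t) := by
        rw [show (b * (t * u)) * (b * t) = (b * t) * u * (b * t) from by noncomm_ring, hcore]
    _ = -(((Real.sqrt 2 : ℂ) * Complex.I) • (-(t * u * t))) := by
        rw [smul_neg, neg_neg]

end BaseCalc
section PartB

variable {n : ℕ}

/-- simple reflection of `W_{B_n}` indexed by a natural number (junk `1` out of range). -/
def sBn (n : ℕ) (a : ℕ) : WB n :=
  if h : a + 1 < n then sB ⟨a, by omega⟩ ⟨a + 1, h⟩ else 1

lemma sBn_eq (a b : Fin n) (h : (b : ℕ) = (a : ℕ) + 1) : sBn n (a : ℕ) = sB a b := by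
  unfold sBn
  rw [dif_pos (by have := b.isLt; omega)]
  congr 1 <;> apply Fin.ext <;> simp [h.symm]

lemma simpleB_eq_sB (a b : Fin n) (h : (b : ℕ) = (a : ℕ) + 1) : simpleB a = sB a b := by
  unfold simpleB
  rw [dif_pos (by have := b.isLt; omega : (a : ℕ) + 1 < n)]
  congr 1
  apply Fin.ext
  simp [h.symm]

lemma simpleB_eq_tau (a : Fin n) (h : (a : ℕ) + 1 = n) : simpleB a = tauB a := by
  unfold simpleB
  rw [dif_neg (by omega)]

lemma sB_comm (i k : Fin n) : sB i k = sB k i := by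
  unfold sB
  rw [Equiv.swap_comm]

lemma sbarB_comm (i k : Fin n) : sbarB i k = sbarB k i := by
  unfold sbarB
  rw [Equiv.swap_comm]
  congr 1
  funext r
  congr 1
  simp [or_comm]

theorem partB (hn : 2 ≤ n) (Φ : Smash n (WB n) actB ≃ₐ[ℂ] TCB n)
    (hc : ∀ i, Φ (kC actB i) = qtcCB i)
    (hs : ∀ a : Fin n, Φ (kG actB (simpleB a))
      = -(Complex.I • (betaBof qtcCB a * qtcTB a))) :
    (∀ i k : Fin n, i ≠ k →
      (Φ ((kC actB k - kC actB i) * kG actB (sB i k))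
        = -((((Real.sqrt 2 : ℂ) * Complex.I)) • brK qtcTnB ((k : ℕ) + 1) ((i : ℕ) + 1))) ∧
      (Φ ((kC actB k + kC actB i) * kG actB (sbarB i k))
        = -((((Real.sqrt 2 : ℂ) * Complex.I)) • brBbar qtcTnB n ((k : ℕ) + 1) ((i : ℕ) + 1)))) ∧
    (∀ i : Fin n, Φ (kC actB i * kG actB (tauB i))
        = -(Complex.I • brBi qtcTnB n ((i : ℕ) + 1))) := by
  -- basic action facts
  have hsw : ∀ (a b : Fin n), (b : ℕ) = (a : ℕ) + 1 → actB (sBn n (a : ℕ)) a = (1, b) := by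
    intro a b h
    rw [sBn_eq a b h, actB_sB, Equiv.swap_apply_left]
  have hsw' : ∀ (a b : Fin n), (b : ℕ) = (a : ℕ) + 1 → actB (sBn n (a : ℕ)) b = (1, a) := by
    intro a b h
    rw [sBn_eq a b h, actB_sB, Equiv.swap_apply_right]
  have hfix : ∀ (a : ℕ) (i : Fin n), a + 1 < n → (i : ℕ) ≠ a → (i : ℕ) ≠ a + 1 →
      actB (sBn n a) i = (1, i) := by
    intro a i ha h1 h2
    unfold sBn
    rw [dif_pos ha, actB_sB,
      Equiv.swap_apply_of_ne_of_ne (by simp [Fin.ext_iff, h1]) (by simp [Fin.ext_iff, h2])]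
  have hphis : ∀ (a b : Fin n), (b : ℕ) = (a : ℕ) + 1 →
      Φ.toAlgHom (kG actB (sBn n (a : ℕ)))
        = -(Complex.I • ((((Real.sqrt 2 : ℂ))⁻¹ • (qtcCB a - qtcCB b)) * qtcTnB ((a : ℕ) + 1))) := by
    intro a b h
    have hb : (a : ℕ) + 1 < n := by have := b.isLt; omega
    have e2 := hs a
    rw [simpleB_eq_sB a b h] at e2
    have e3 : betaBof (qtcCB (n := n)) a = ((Real.sqrt 2 : ℂ))⁻¹ • (qtcCB a - qtcCB b) := by
      unfold betaBof
      rw [dif_pos hb]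
      congr 2
      apply congrArg
      apply Fin.ext
      simp [h.symm]
    have e4 : qtcTB (n := n) a = qtcTnB ((a : ℕ) + 1) := (qtcTnB_eq a).symm
    show Φ (kG actB (sBn n (a : ℕ))) = _
    rw [sBn_eq a b h, e2, e3, e4, smul_mul_assoc]
  -- the brK part
  have key1 := generic_brK (n := n) (act := actB) Φ.toAlgHom qtcCB qtcTnB
    qtcCB_sq (fun i j h => qtcCB_anti h) (fun k h1 h2 => qtcTnB_anti k h1 (by omega))
    (fun i => hc i) (sBn n) (fun i k => sB i k) hsw hsw' hfix
    (fun i k h => (sBn_eq i k h).symm)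
    (fun i k k' h1 h2 => by
      rw [sBn_eq k k' h2]
      have e := sB_conj_sB k k' i k
      rw [Equiv.swap_apply_of_ne_of_ne (by simp [Fin.ext_iff]; omega)
        (by simp [Fin.ext_iff]; omega), Equiv.swap_apply_left] at e
      exact e.symm)
    hphis
  -- the bar part
  have key2 := generic_bar (n := n) (act := actB) Φ.toAlgHom qtcCB qtcTnB
    qtcCB_sq (fun i j h => qtcCB_anti h) qtcTnB_anti (sBn n) sbarB hsw' hfix hphis hn
    (brBbar qtcTnB n)
    (by
      -- base case
      intro i k hi hk
      have hik : i ≠ k := by intro h; rw [h] at hi; omega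
      have hikv : (k : ℕ) = (i : ℕ) + 1 := by omega
      rw [show sbarB i k = tauB k * sB i k * tauB k from (tau_conj_sB i k hik).symm]
      rw [show kG actB (tauB k * sB i k * tauB k)
        = kG actB (tauB k) * kG actB (sB i k) * kG actB (tauB k) from by
          rw [kG_mul, kG_mul]]
      show Φ _ = _
      rw [map_mul, map_mul, map_mul, map_add, hc, hc]
      have et : Φ (kG actB (tauB k)) = -(Complex.I • (qtcCB k * qtcTnB n)) := by
        have := hs k
        rw [simpleB_eq_tau k (by omega)] at this
        rw [this]
        unfold betaBof
        rw [dif_neg (by omega)]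
        rw [show qtcTB k = qtcTnB ((k : ℕ) + 1) from (qtcTnB_eq k).symm,
          show (k : ℕ) + 1 = n from by omega]
      have es : Φ (kG actB (sB i k))
          = -(Complex.I • ((((Real.sqrt 2 : ℂ))⁻¹ • (qtcCB i - qtcCB k)) * qtcTnB (n - 1))) := by
        have := hphis i k hikv
        rw [sBn_eq i k hikv] at this
        show _ = _
        rw [show Φ (kG actB (sB i k)) = Φ.toAlgHom (kG actB (sB i k)) from rfl, this,
          show (i : ℕ) + 1 = n - 1 from by omega]
      rw [et, es, brBbar_base qtcTnB hn]
      exact baseB_calc (qtcCB i) (qtcCB k) (qtcTnB n) (qtcTnB (n - 1))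
        (qtcCB_sq i) (qtcCB_sq k) (qtcCB_anti hik)
        (qtcTnB_anti n (by omega) le_rfl i) (qtcTnB_anti (n - 1) (by omega) (by omega) i)
        (qtcTnB_anti n (by omega) le_rfl k) (qtcTnB_anti (n - 1) (by omega) (by omega) k))
    (by
      rw [brBbar_base qtcTnB hn]
      exact ((qtcTnB_anti n (by omega) le_rfl).conj (qtcTnB_anti (n - 1) (by omega)
        (by omega))).neg)
    (fun i j h1 h2 h3 => brBbar_stepj qtcTnB h2 h3)
    (fun i h1 h2 => brBbar_stepi qtcTnB h1 (by omega))
    (fun i j j' h1 h2 => by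
      rw [sBn_eq j j' h2]
      have e := sB_conj_sbarB j j' i j'
      rw [Equiv.swap_apply_of_ne_of_ne (by simp [Fin.ext_iff]; omega)
        (by simp [Fin.ext_iff]; omega), Equiv.swap_apply_right] at e
      exact e.symm)
    (fun i i' j h1 h2 => by
      rw [sBn_eq i i' h1]
      have e := sB_conj_sbarB i i' i' j
      rw [Equiv.swap_apply_right, Equiv.swap_apply_of_ne_of_ne (by simp [Fin.ext_iff]; omega)
        (by simp [Fin.ext_iff]; omega)] at e
      exact e.symm)
  -- the tau part
  have key3 := generic_tau (n := n) (act := actB) Φ.toAlgHom qtcCB qtcTnB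
    qtcCB_sq (fun i j h => qtcCB_anti h) qtcTnB_anti (sBn n) tauB hsw' hphis (by omega)
    (by
      intro i hi
      show Φ _ = _
      rw [map_mul, hc]
      have et : Φ (kG actB (tauB i)) = -(Complex.I • (qtcCB i * qtcTnB n)) := by
        have := hs i
        rw [simpleB_eq_tau i (by omega)] at this
        rw [this]
        unfold betaBof
        rw [dif_neg (by omega)]
        rw [show qtcTB i = qtcTnB ((i : ℕ) + 1) from (qtcTnB_eq i).symm,
          show (i : ℕ) + 1 = n from by omega]
      rw [et, brBi_base qtcTnB (by omega)]
      exact baseTau_calc (qtcCB i) (qtcTnB n) (qtcCB_sq i))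
    (fun i i' h => by
      rw [sBn_eq i i' h]
      have e := sB_conj_tauB i i' i'
      rw [Equiv.swap_apply_right] at e
      exact e.symm)
  refine ⟨?_, key3⟩
  intro i k hik
  constructor
  · rcases Nat.lt_or_ge (i : ℕ) (k : ℕ) with h | h
    · have := key1 i k h
      rw [brK_antisymm qtcTnB (by omega : (i : ℕ) + 1 < (k : ℕ) + 1), smul_neg, neg_neg]
      exact this
    · have hlt : (k : ℕ) < (i : ℕ) := by
        rcases Nat.lt_or_ge (k : ℕ) (i : ℕ) with h' | h'
        · exact h'
        · exact absurd (Fin.ext (by omega)) hik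
      have := key1 k i hlt
      rw [show (kC actB k - kC actB i) * kG actB (sB i k)
        = -((kC actB i - kC actB k) * kG actB (sB k i)) from by
          rw [sB_comm i k, ← neg_sub (kC actB i)]
          exact neg_mul (kC actB i - kC actB k) (kG actB (sB k i)), map_neg]
      show -(Φ.toAlgHom _) = _
      rw [this]
  · rcases Nat.lt_or_ge (i : ℕ) (k : ℕ) with h | h
    · have := key2 i k h
      rw [brBbar_comm qtcTnB n (by omega : (i : ℕ) + 1 < (k : ℕ) + 1)]
      exact this
    · have hlt : (k : ℕ) < (i : ℕ) := by
        rcases Nat.lt_or_ge (k : ℕ) (i : ℕ) with h' | h'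
        · exact h'
        · exact absurd (Fin.ext (by omega)) hik
      have := key2 k i hlt
      rw [show (kC actB k + kC actB i) * kG actB (sbarB i k)
        = (kC actB i + kC actB k) * kG actB (sbarB k i) from by
          rw [sbarB_comm i k, add_comm]]
      exact this

end PartB
section PartD

variable {n : ℕ}

/-- simple reflection of `W_{D_n}` indexed by a natural number (junk `1` out of range). -/
def sDn (n : ℕ) (a : ℕ) : WDsub n :=
  if h : a + 1 < n then sD ⟨a, by omega⟩ ⟨a + 1, h⟩ else 1

lemma sD_coe (i j : Fin n) : ((sD i j : WDsub n) : WB n) = sB i j := rfl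

lemma sDn_coe (a : ℕ) : ((sDn n a : WDsub n) : WB n) = sBn n a := by
  unfold sDn sBn
  split_ifs with h
  · rfl
  · simp

lemma sbarD_coe {i j : Fin n} (h : i ≠ j) : ((sbarD i j : WDsub n) : WB n) = sbarB i j := by
  unfold sbarD
  rw [dif_neg h]

lemma actD_eq (w : WDsub n) (i : Fin n) : actD w i = actB (w : WB n) i := rfl

lemma sDn_eq (a b : Fin n) (h : (b : ℕ) = (a : ℕ) + 1) : sDn n (a : ℕ) = sD a b := by
  apply Subtype.ext
  rw [sDn_coe, sD_coe]
  exact sBn_eq a b h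

lemma simpleD_eq_sD (a b : Fin n) (h : (b : ℕ) = (a : ℕ) + 1) : simpleD a = sD a b := by
  unfold simpleD
  rw [dif_pos (by have := b.isLt; omega : (a : ℕ) + 1 < n)]
  apply Subtype.ext
  rw [sD_coe, sD_coe]
  congr 1
  apply Fin.ext
  simp [h.symm]

lemma sD_comm (i k : Fin n) : sD i k = sD k i := by
  apply Subtype.ext
  rw [sD_coe, sD_coe, sB_comm]

lemma sbarD_comm {i k : Fin n} (h : i ≠ k) : sbarD i k = sbarD k i := by
  apply Subtype.ext
  rw [sbarD_coe h, sbarD_coe (Ne.symm h), sbarB_comm]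

theorem partD (hn : 4 ≤ n) (Φ : Smash n (WDsub n) actD ≃ₐ[ℂ] TCD n)
    (hc : ∀ i, Φ (kC actD i) = qtcCD i)
    (hs : ∀ a : Fin n, Φ (kG actD (simpleD a))
      = -(Complex.I • (betaDof qtcCD a * qtcTD a)))
    (i k : Fin n) (hik : i ≠ k) :
    (Φ ((kC actD k - kC actD i) * kG actD (sD i k))
      = -((((Real.sqrt 2 : ℂ) * Complex.I)) • brK qtcTnD ((k : ℕ) + 1) ((i : ℕ) + 1))) ∧
    (Φ ((kC actD k + kC actD i) * kG actD (sbarD i k))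
      = -((((Real.sqrt 2 : ℂ) * Complex.I)) • brDbar qtcTnD n ((k : ℕ) + 1) ((i : ℕ) + 1))) := by
  have hsw : ∀ (a b : Fin n), (b : ℕ) = (a : ℕ) + 1 → actD (sDn n (a : ℕ)) a = (1, b) := by
    intro a b h
    rw [actD_eq, sDn_coe, sBn_eq a b h, actB_sB, Equiv.swap_apply_left]
  have hsw' : ∀ (a b : Fin n), (b : ℕ) = (a : ℕ) + 1 → actD (sDn n (a : ℕ)) b = (1, a) := by
    intro a b h
    rw [actD_eq, sDn_coe, sBn_eq a b h, actB_sB, Equiv.swap_apply_right]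
  have hfix : ∀ (a : ℕ) (i : Fin n), a + 1 < n → (i : ℕ) ≠ a → (i : ℕ) ≠ a + 1 →
      actD (sDn n a) i = (1, i) := by
    intro a i ha h1 h2
    rw [actD_eq, sDn_coe]
    unfold sBn
    rw [dif_pos ha, actB_sB,
      Equiv.swap_apply_of_ne_of_ne (by simp [Fin.ext_iff, h1]) (by simp [Fin.ext_iff, h2])]
  have hphis : ∀ (a b : Fin n), (b : ℕ) = (a : ℕ) + 1 →
      Φ.toAlgHom (kG actD (sDn n (a : ℕ)))
        = -(Complex.I • ((((Real.sqrt 2 : ℂ))⁻¹ • (qtcCD a - qtcCD b)) * qtcTnD ((a : ℕ) + 1))) := by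
    intro a b h
    have hb : (a : ℕ) + 1 < n := by have := b.isLt; omega
    have e2 := hs a
    rw [simpleD_eq_sD a b h] at e2
    have e3 : betaDof (qtcCD (n := n)) a = ((Real.sqrt 2 : ℂ))⁻¹ • (qtcCD a - qtcCD b) := by
      unfold betaDof
      rw [dif_pos hb]
      congr 2
      apply congrArg
      apply Fin.ext
      simp [h.symm]
    have e4 : qtcTD (n := n) a = qtcTnD ((a : ℕ) + 1) := (qtcTnD_eq a).symm
    show Φ (kG actD (sDn n (a : ℕ))) = _
    rw [sDn_eq a b h, e2, e3, e4, smul_mul_assoc]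
  have key1 := generic_brK (n := n) (act := actD) Φ.toAlgHom qtcCD qtcTnD
    qtcCD_sq (fun i j h => qtcCD_anti h) (fun k h1 h2 => qtcTnD_anti k h1 (by omega))
    (fun i => hc i) (sDn n) (fun i k => sD i k) hsw hsw' hfix
    (fun i k h => (sDn_eq i k h).symm)
    (fun i k k' h1 h2 => by
      rw [sDn_eq k k' h2]
      apply Subtype.ext
      rw [Subgroup.coe_mul, Subgroup.coe_mul, sD_coe, sD_coe, sD_coe]
      have e := sB_conj_sB k k' i k
      rw [Equiv.swap_apply_of_ne_of_ne (by simp [Fin.ext_iff]; omega)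
        (by simp [Fin.ext_iff]; omega), Equiv.swap_apply_left] at e
      exact e.symm)
    hphis
  have key2 := generic_bar (n := n) (act := actD) Φ.toAlgHom qtcCD qtcTnD
    qtcCD_sq (fun i j h => qtcCD_anti h) qtcTnD_anti (sDn n) sbarD hsw' hfix hphis (by omega)
    (brDbar qtcTnD n)
    (by
      intro i k hi hk
      have hik : i ≠ k := by intro h; rw [h] at hi; omega
      have hsd : sbarD i k = simpleD k := by
        unfold simpleD
        rw [dif_neg (by omega)]
        congr 1 <;> apply Fin.ext <;> simp <;> omega
      show Φ _ = _
      rw [hsd, map_mul, map_add, hc, hc, hs k]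
      have e3 : betaDof (qtcCD (n := n)) k
          = ((Real.sqrt 2 : ℂ))⁻¹ • (qtcCD i + qtcCD k) := by
        unfold betaDof
        rw [dif_neg (by omega)]
        congr 2 <;> apply congrArg <;> apply Fin.ext <;> simp <;> omega
      have e4 : qtcTD (n := n) k = qtcTnD n := by
        rw [(qtcTnD_eq k).symm, show (k : ℕ) + 1 = n from by omega]
      rw [e3, e4, brDbar_base qtcTnD (by omega)]
      exact baseD_calc (qtcCD i) (qtcCD k) (qtcTnD n) (qtcCD_sq i) (qtcCD_sq k)
        (qtcCD_anti hik))
    (by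
      rw [brDbar_base qtcTnD (by omega)]
      exact qtcTnD_anti n (by omega) le_rfl)
    (fun i j h1 h2 h3 => brDbar_stepj qtcTnD h2 h3)
    (fun i h1 h2 => brDbar_stepi qtcTnD h1 (by omega))
    (fun i j j' h1 h2 => by
      rw [sDn_eq j j' h2]
      apply Subtype.ext
      rw [Subgroup.coe_mul, Subgroup.coe_mul, sD_coe,
        sbarD_coe (show i ≠ j from by rintro rfl; omega),
        sbarD_coe (show i ≠ j' from by rintro rfl; omega)]
      have e := sB_conj_sbarB j j' i j'
      rw [Equiv.swap_apply_of_ne_of_ne (by simp [Fin.ext_iff]; omega)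
        (by simp [Fin.ext_iff]; omega), Equiv.swap_apply_right] at e
      exact e.symm)
    (fun i i' j h1 h2 => by
      rw [sDn_eq i i' h1]
      apply Subtype.ext
      rw [Subgroup.coe_mul, Subgroup.coe_mul, sD_coe,
        sbarD_coe (show i ≠ j from by rintro rfl; omega),
        sbarD_coe (show i' ≠ j from by rintro rfl; omega)]
      have e := sB_conj_sbarB i i' i' j
      rw [Equiv.swap_apply_right, Equiv.swap_apply_of_ne_of_ne (by simp [Fin.ext_iff]; omega)
        (by simp [Fin.ext_iff]; omega)] at e
      exact e.symm)
  constructor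
  · rcases Nat.lt_or_ge (i : ℕ) (k : ℕ) with h | h
    · have := key1 i k h
      rw [brK_antisymm qtcTnD (by omega : (i : ℕ) + 1 < (k : ℕ) + 1), smul_neg, neg_neg]
      exact this
    · have hlt : (k : ℕ) < (i : ℕ) := by
        rcases Nat.lt_or_ge (k : ℕ) (i : ℕ) with h' | h'
        · exact h'
        · exact absurd (Fin.ext (by omega)) hik
      have := key1 k i hlt
      rw [show (kC actD k - kC actD i) * kG actD (sD i k)
        = -((kC actD i - kC actD k) * kG actD (sD k i)) from by
          rw [sD_comm i k, ← neg_sub (kC actD i)]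
          exact neg_mul (kC actD i - kC actD k) (kG actD (sD k i)), map_neg]
      show -(Φ.toAlgHom _) = _
      rw [this]
  · rcases Nat.lt_or_ge (i : ℕ) (k : ℕ) with h | h
    · have := key2 i k h
      rw [brDbar_comm qtcTnD n (by omega : (i : ℕ) + 1 < (k : ℕ) + 1)]
      exact this
    · have hlt : (k : ℕ) < (i : ℕ) := by
        rcases Nat.lt_or_ge (k : ℕ) (i : ℕ) with h' | h'
        · exact h'
        · exact absurd (Fin.ext (by omega)) hik
      have := key2 k i hlt
      rw [show (kC actD k + kC actD i) * kG actD (sbarD i k)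
        = (kC actD i + kC actD k) * kG actD (sbarD k i) from by
          rw [sbarD_comm hik, add_comm]]
      exact this

end PartD

/-- **Images of reflections under the isomorphism `Φ : C_n ⋊ ℂW → C_n ⊗ ℂW⁻`**
(Khongsap-Wang, Lemma 5.1).  If `Φ` is the superalgebra isomorphism which is the identity
on `C_n` and sends `s_i ↦ -√-1 β_i t_i`, then for `i ≠ k`:
`Φ((c_k - c_i)s_{ik}) = -√-2 [k,i]`; in types `D_n, B_n`,
`Φ((c_k + c_i)s̄_{ik}) = -√-2 bar[k,i]`; and in type `B_n`, `Φ(c_i τ_i) = -√-1 bar[i]`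
(where `√-2 = √2 √-1`). -/
theorem iso_image_of_reflections (n : ℕ) :
    (∀ Φ : Smash n (Equiv.Perm (Fin n)) (actA n) ≃ₐ[ℂ] TCA n,
      (∀ i, Φ (kC (actA n) i) = qtcCA i) →
      (∀ a : Fin (n - 1), Φ (kG (actA n) (simpleA a))
          = -(Complex.I • (betaAof qtcCA a * qtcTA a))) →
      ∀ i k : Fin n, i ≠ k →
        Φ ((kC (actA n) k - kC (actA n) i) * kG (actA n) (Equiv.swap i k))
          = -((((Real.sqrt 2 : ℂ) * Complex.I)) •
              brK qtcTnA ((k : ℕ) + 1) ((i : ℕ) + 1))) ∧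
    (4 ≤ n →
      ∀ Φ : Smash n (WDsub n) actD ≃ₐ[ℂ] TCD n,
      (∀ i, Φ (kC actD i) = qtcCD i) →
      (∀ a : Fin n, Φ (kG actD (simpleD a))
          = -(Complex.I • (betaDof qtcCD a * qtcTD a))) →
      ∀ i k : Fin n, i ≠ k →
        (Φ ((kC actD k - kC actD i) * kG actD (sD i k))
          = -((((Real.sqrt 2 : ℂ) * Complex.I)) •
              brK qtcTnD ((k : ℕ) + 1) ((i : ℕ) + 1))) ∧
        (Φ ((kC actD k + kC actD i) * kG actD (sbarD i k))
          = -((((Real.sqrt 2 : ℂ) * Complex.I)) •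
              brDbar qtcTnD n ((k : ℕ) + 1) ((i : ℕ) + 1)))) ∧
    (2 ≤ n →
      ∀ Φ : Smash n (WB n) actB ≃ₐ[ℂ] TCB n,
      (∀ i, Φ (kC actB i) = qtcCB i) →
      (∀ a : Fin n, Φ (kG actB (simpleB a))
          = -(Complex.I • (betaBof qtcCB a * qtcTB a))) →
      (∀ i k : Fin n, i ≠ k →
        (Φ ((kC actB k - kC actB i) * kG actB (sB i k))
          = -((((Real.sqrt 2 : ℂ) * Complex.I)) •
              brK qtcTnB ((k : ℕ) + 1) ((i : ℕ) + 1))) ∧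
        (Φ ((kC actB k + kC actB i) * kG actB (sbarB i k))
          = -((((Real.sqrt 2 : ℂ) * Complex.I)) •
              brBbar qtcTnB n ((k : ℕ) + 1) ((i : ℕ) + 1)))) ∧
      (∀ i : Fin n,
        Φ (kC actB i * kG actB (tauB i))
          = -(Complex.I • brBi qtcTnB n ((i : ℕ) + 1)))) := by
  refine ⟨fun Φ hc hs i k hik => partA n Φ hc hs i k hik,
    fun hn Φ hc hs i k hik => partD hn Φ hc hs i k hik,
    fun hn Φ hc hs => partB hn Φ hc hs⟩

end
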